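/- arXiv:1708.04881 — 4 statements merged into one kernel-verified Lean document; each statement's English description precedes it below -/
import Mathlib

section
/- Let i ∈ N be a buyer and let ξ be a maximal element of the clinching polytope P^i_{w,d} (i.e., ξ ∈ P^i_{w,d} and no ξ' ∈ P^i_{w,d} satisfies ξ' ≥ ξ componentwise with ξ' ≠ ξ). Then ξ(E_i) = f_{w,d}(E) − f_{w,d}(E \ E_i). -/
open Finset

noncomputable section

namespace TwoSidedMarket

variable {B S : Type*} [Fintype B] [Fintype S] [DecidableEq B] [DecidableEq S]

/-- A function `f` on subsets of a ground set `G` is monotone submodular: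
`f ∅ = 0`, monotone on subsets of `G`, and submodular on subsets of `G`. -/
def IsMonoSubmodular {α : Type*} [DecidableEq α] (G : Finset α) (f : Finset α → ℝ) : Prop :=
  f ∅ = 0 ∧ (∀ A B : Finset α, A ⊆ B → B ⊆ G → f A ≤ f B) ∧
    ∀ A B : Finset α, A ⊆ G → B ⊆ G → f (A ∩ B) + f (A ∪ B) ≤ f A + f B

/-- Monotone submodular, without the requirement of vanishing at `∅`. -/
def IsMonoSubmodularWeak {α : Type*} [DecidableEq α] (G : Finset α) (f : Finset α → ℝ) : Prop :=
  (∀ A B : Finset α, A ⊆ B → B ⊆ G → f A ≤ f B) ∧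
    ∀ A B : Finset α, A ⊆ G → B ⊆ G → f (A ∩ B) + f (A ∪ B) ≤ f A + f B

/-- `E_i`: the edges of `E` incident to buyer `i`. -/
def Ei (E : Finset (B × S)) (i : B) : Finset (B × S) := E.filter fun e => e.1 = i

/-- `E_j`: the edges of `E` incident to seller `j`. -/
def Ej (E : Finset (B × S)) (j : S) : Finset (B × S) := E.filter fun e => e.2 = j

/-- `E_X`: the edges of `E` incident to some buyer in `X`. -/
def EX (E : Finset (B × S)) (X : Finset B) : Finset (B × S) := E.filter fun e => e.1 ∈ X

/-- `N_F`: the buyers incident to some edge of `F`. -/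
def NF (F : Finset (B × S)) : Finset B := F.image Prod.fst

/-- `x(F) = Σ_{e ∈ F} x e`. -/
def vsum (x : B × S → ℝ) (F : Finset (B × S)) : ℝ := ∑ e ∈ F, x e

/-- Membership `w ∈ P = ⊕_j P_j`: `w` is nonnegative, supported on `E`, and
`w|_{E_j} ∈ P_j` for every seller `j`. -/
def memP (E : Finset (B × S)) (fj : S → Finset (B × S) → ℝ) (w : B × S → ℝ) : Prop :=
  (∀ e, 0 ≤ w e) ∧ (∀ e ∉ E, w e = 0) ∧ ∀ j : S, ∀ F ⊆ Ej E j, vsum w F ≤ fj j F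

/-- `f(F) := Σ_{j ∈ M} f_j (E_j ∩ F)`. -/
def fTot (E : Finset (B × S)) (fj : S → Finset (B × S) → ℝ) (F : Finset (B × S)) : ℝ :=
  ∑ j : S, fj j (Ej E j ∩ F)

/-- `f_w(F) := min_{F ⊆ F' ⊆ E} (f(F') - w(F'))`. -/
def fw (E : Finset (B × S)) (fj : S → Finset (B × S) → ℝ)
    (w : B × S → ℝ) (F : Finset (B × S)) : ℝ :=
  sInf {r : ℝ | ∃ F' : Finset (B × S), F ⊆ F' ∧ F' ⊆ E ∧ r = fTot E fj F' - vsum w F'}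

/-- Membership in the remnant supply polytope `P_{w,d}`. -/
def memPwd (E : Finset (B × S)) (fj : S → Finset (B × S) → ℝ)
    (w : B × S → ℝ) (d : B → ℝ) (x : B × S → ℝ) : Prop :=
  (∀ e, 0 ≤ x e) ∧ (∀ e ∉ E, x e = 0) ∧ memP E fj (w + x) ∧
    ∀ i : B, vsum x (Ei E i) ≤ d i

/-- `f_{w,d}(F) := max_{x ∈ P_{w,d}} x(F)`. -/
def fwd (E : Finset (B × S)) (fj : S → Finset (B × S) → ℝ)
    (w : B × S → ℝ) (d : B → ℝ) (F : Finset (B × S)) : ℝ :=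
  sSup {r : ℝ | ∃ x : B × S → ℝ, memPwd E fj w d x ∧ r = vsum x F}

/-- `P^i_{w,d}(ξ)`: the remnant supply polytope of the buyers other than `i`,
given that buyer `i` receives `ξ`.  (Vectors indexed by `N - i` are encoded as
functions on all of `B` vanishing at `i`.) -/
def PiWd (E : Finset (B × S)) (fj : S → Finset (B × S) → ℝ)
    (w : B × S → ℝ) (d : B → ℝ) (i : B) (ξ : B × S → ℝ) : Set (B → ℝ) :=
  {u | u i = 0 ∧ (∀ k, 0 ≤ u k) ∧
    ∃ x : B × S → ℝ, memPwd E fj w d x ∧ (∀ e ∈ Ei E i, x e = ξ e) ∧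
      ∀ k : B, k ≠ i → vsum x (Ei E k) = u k}

/-- The clinching polytope `P^i_{w,d}` of buyer `i`:
all `ξ ∈ ℝ_{≥0}^{E_i}` with `P^i_{w,d}(ξ) = P^i_{w,d}(0)`. -/
def ClinchP (E : Finset (B × S)) (fj : S → Finset (B × S) → ℝ)
    (w : B × S → ℝ) (d : B → ℝ) (i : B) : Set (B × S → ℝ) :=
  {ξ | (∀ e, 0 ≤ ξ e) ∧ (∀ e ∉ Ei E i, ξ e = 0) ∧
    PiWd E fj w d i ξ = PiWd E fj w d i 0}



/-! ### Auxiliary development -/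

section CoreProof
set_option linter.unusedSectionVars false
set_option maxHeartbeats 1000000

variable (E : Finset (B × S)) (fj : S → Finset (B × S) → ℝ) (w : B × S → ℝ) (d : B → ℝ)

/-- The global rank-type function `r(A) = f(A) - w(A)`. -/
def rk (A : Finset (B × S)) : ℝ := fTot E fj A - vsum w A

lemma vsum_nonneg {x : B × S → ℝ} (h0 : ∀ e, 0 ≤ x e) (F : Finset (B × S)) :
    0 ≤ vsum x F := Finset.sum_nonneg fun e _ => h0 e

lemma vsum_mono {x : B × S → ℝ} (h0 : ∀ e, 0 ≤ x e) {F G : Finset (B × S)} (h : F ⊆ G) :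
    vsum x F ≤ vsum x G :=
  Finset.sum_le_sum_of_subset_of_nonneg h fun e _ _ => h0 e

lemma vsum_le_vsum {x y : B × S → ℝ} (h : ∀ e, x e ≤ y e) (F : Finset (B × S)) :
    vsum x F ≤ vsum y F := Finset.sum_le_sum fun e _ => h e

lemma vsum_add (x y : B × S → ℝ) (F : Finset (B × S)) :
    vsum (x + y) F = vsum x F + vsum y F := by
  simpa [vsum] using Finset.sum_add_distrib

lemma vsum_union_inter (x : B × S → ℝ) (A C : Finset (B × S)) :
    vsum x (A ∪ C) + vsum x (A ∩ C) = vsum x A + vsum x C :=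
  Finset.sum_union_inter

lemma vsum_inter_diff (x : B × S → ℝ) (A C : Finset (B × S)) :
    vsum x (A ∩ C) + vsum x (A \ C) = vsum x A :=
  Finset.sum_inter_add_sum_sdiff A C x

/-- Sum over buyer fibers. -/
lemma vsum_fiber_buyer (x : B × S → ℝ) {A : Finset (B × S)} (hA : A ⊆ E) :
    vsum x A = ∑ k : B, vsum x (A ∩ Ei E k) := by
  have h1 : ∀ k : B, A ∩ Ei E k = A.filter fun e => e.1 = k := by
    intro k
    ext e
    simp only [Finset.mem_inter, Ei, Finset.mem_filter]
    exact ⟨fun ⟨h1, _, h3⟩ => ⟨h1, h3⟩, fun ⟨h1, h2⟩ => ⟨h1, hA h1, h2⟩⟩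
  simp only [h1]
  exact (Finset.sum_fiberwise A (fun e => e.1) x).symm

/-- Sum over seller fibers. -/
lemma vsum_fiber_seller (x : B × S → ℝ) {A : Finset (B × S)} (hA : A ⊆ E) :
    vsum x A = ∑ j : S, vsum x (Ej E j ∩ A) := by
  have h1 : ∀ j : S, Ej E j ∩ A = A.filter fun e => e.2 = j := by
    intro j
    ext e
    simp only [Finset.mem_inter, Ej, Finset.mem_filter]
    exact ⟨fun ⟨⟨_, h3⟩, h1⟩ => ⟨h1, h3⟩, fun ⟨h1, h2⟩ => ⟨⟨hA h1, h2⟩, h1⟩⟩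
  simp only [h1]
  exact (Finset.sum_fiberwise A (fun e => e.2) x).symm

lemma Ei_subset (k : B) : Ei E k ⊆ E := Finset.filter_subset _ _

lemma Ei_disjoint {k k' : B} (h : k ≠ k') : Disjoint (Ei E k) (Ei E k') := by
  rw [Finset.disjoint_left]
  intro e he he'
  simp only [Ei, Finset.mem_filter] at he he'
  exact h (he.2 ▸ he'.2.symm ▸ rfl)

/-- Explicit description of the remnant supply polytope. -/
def Feas (x : B × S → ℝ) : Prop :=
  (∀ e, 0 ≤ x e) ∧ (∀ e ∉ E, x e = 0) ∧
    (∀ A ⊆ E, vsum x A ≤ rk E fj w A) ∧ ∀ k : B, vsum x (Ei E k) ≤ d k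

variable {E fj w d}

lemma fTot_eq_of_subset_Ej (hfj : ∀ j : S, IsMonoSubmodular (Ej E j) (fj j))
    {j : S} {F : Finset (B × S)} (hF : F ⊆ Ej E j) : fTot E fj F = fj j F := by
  unfold fTot
  rw [Finset.sum_eq_single_of_mem j (Finset.mem_univ j)]
  · rw [Finset.inter_eq_right.2 hF]
  · intro j' _ hj'
    have : Ej E j' ∩ F = ∅ := by
      rw [Finset.eq_empty_iff_forall_notMem]
      intro e he
      rw [Finset.mem_inter] at he
      have h1 : e.2 = j' := (Finset.mem_filter.1 he.1).2
      have h2 : e.2 = j := (Finset.mem_filter.1 (hF he.2)).2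
      exact hj' (h1 ▸ h2)
    rw [this]
    exact (hfj j').1

lemma memPwd_iff_feas (hfj : ∀ j : S, IsMonoSubmodular (Ej E j) (fj j))
    (hw : memP E fj w) {x : B × S → ℝ} :
    memPwd E fj w d x ↔ Feas E fj w d x := by
  constructor
  · rintro ⟨hx0, hxE, ⟨-, -, hP⟩, hcap⟩
    refine ⟨hx0, hxE, ?_, hcap⟩
    intro A hA
    have key : ∀ j : S, vsum x (Ej E j ∩ A) ≤ fj j (Ej E j ∩ A) - vsum w (Ej E j ∩ A) := by
      intro j
      have h1 := hP j (Ej E j ∩ A) (Finset.inter_subset_left)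
      rw [vsum_add] at h1
      linarith
    have h2 : vsum x A = ∑ j : S, vsum x (Ej E j ∩ A) := vsum_fiber_seller E x hA
    have h3 : vsum w A = ∑ j : S, vsum w (Ej E j ∩ A) := vsum_fiber_seller E w hA
    rw [h2, rk, fTot, h3]
    rw [← Finset.sum_sub_distrib]
    exact Finset.sum_le_sum fun j _ => key j
  · rintro ⟨hx0, hxE, hA, hcap⟩
    refine ⟨hx0, hxE, ⟨fun e => add_nonneg (hw.1 e) (hx0 e), ?_, ?_⟩, hcap⟩
    · intro e he
      simp [Pi.add_apply, hw.2.1 e he, hxE e he]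
    · intro j F hF
      have hFE : F ⊆ E := hF.trans (Finset.filter_subset _ _)
      have h1 : vsum x F ≤ rk E fj w F := hA F hFE
      rw [rk, fTot_eq_of_subset_Ej hfj hF] at h1
      rw [vsum_add]
      linarith

lemma rk_empty (hfj : ∀ j : S, IsMonoSubmodular (Ej E j) (fj j)) : rk E fj w ∅ = 0 := by
  unfold rk fTot vsum
  simp only [Finset.inter_empty, Finset.sum_empty, sub_zero]
  rw [Finset.sum_eq_zero fun j _ => (hfj j).1]

lemma rk_submod (hfj : ∀ j : S, IsMonoSubmodular (Ej E j) (fj j)) (A C : Finset (B × S)) :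
    rk E fj w (A ∪ C) + rk E fj w (A ∩ C) ≤ rk E fj w A + rk E fj w C := by
  unfold rk
  have hw' : vsum w (A ∪ C) + vsum w (A ∩ C) = vsum w A + vsum w C := vsum_union_inter w A C
  have hf : fTot E fj (A ∪ C) + fTot E fj (A ∩ C) ≤ fTot E fj A + fTot E fj C := by
    unfold fTot
    rw [← Finset.sum_add_distrib, ← Finset.sum_add_distrib]
    refine Finset.sum_le_sum fun j _ => ?_
    have h1 : Ej E j ∩ (A ∪ C) = (Ej E j ∩ A) ∪ (Ej E j ∩ C) := Finset.inter_union_distrib_left _ _ _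
    have h2 : Ej E j ∩ (A ∩ C) = (Ej E j ∩ A) ∩ (Ej E j ∩ C) := by
      ext e; simp only [Finset.mem_inter]; tauto
    rw [h1, h2]
    have := (hfj j).2.2 (Ej E j ∩ A) (Ej E j ∩ C) (Finset.inter_subset_left) (Finset.inter_subset_left)
    linarith
  linarith

lemma rk_nonneg (hw : memP E fj w) {A : Finset (B × S)} (hA : A ⊆ E) :
    0 ≤ rk E fj w A := by
  have h3 : vsum w A = ∑ j : S, vsum w (Ej E j ∩ A) := vsum_fiber_seller E w hA
  have key : ∀ j : S, vsum w (Ej E j ∩ A) ≤ fj j (Ej E j ∩ A) :=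
    fun j => hw.2.2 j _ Finset.inter_subset_left
  have : vsum w A ≤ fTot E fj A := by
    rw [h3, fTot]; exact Finset.sum_le_sum fun j _ => key j
  unfold rk; linarith

lemma memPwd_zero (hw : memP E fj w) (hd : ∀ k, 0 ≤ d k) :
    memPwd E fj w d (0 : B × S → ℝ) := by
  refine ⟨fun e => le_refl 0, fun e _ => rfl, ?_, ?_⟩
  · simpa using hw
  · intro k
    simp only [vsum, Pi.zero_apply, Finset.sum_const_zero]
    exact hd k

/-- Down-closedness of the remnant supply polytope. -/
lemma memPwd_of_le (hw : memP E fj w) {x y : B × S → ℝ} (hx : memPwd E fj w d x)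
    (hy0 : ∀ e, 0 ≤ y e) (hyx : ∀ e, y e ≤ x e) (hyE : ∀ e ∉ E, y e = 0) :
    memPwd E fj w d y := by
  obtain ⟨hx0, hxE, ⟨hP0, hPE, hP⟩, hcap⟩ := hx
  refine ⟨hy0, hyE, ⟨fun e => add_nonneg (hw.1 e) (hy0 e), ?_, ?_⟩, ?_⟩
  · intro e he
    simp [Pi.add_apply, hw.2.1 e he, hyE e he]
  · intro j F hF
    calc vsum (w + y) F ≤ vsum (w + x) F :=
          vsum_le_vsum (fun e => by simp only [Pi.add_apply]; linarith [hyx e]) F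
      _ ≤ fj j F := hP j F hF
  · intro k
    exact (vsum_le_vsum hyx _).trans (hcap k)

/-- Restriction of a vector to a finite set `G`. -/
def restr (G : Finset (B × S)) (x : B × S → ℝ) : B × S → ℝ :=
  fun e => if e ∈ G then x e else 0

lemma vsum_restr (G : Finset (B × S)) (x : B × S → ℝ) (A : Finset (B × S)) :
    vsum (restr G x) A = vsum x (A ∩ G) := by
  unfold vsum restr
  rw [← Finset.sum_filter, Finset.filter_mem_eq_inter]

lemma memPwd_restr (hw : memP E fj w) {x : B × S → ℝ} (hx : memPwd E fj w d x)
    (G : Finset (B × S)) : memPwd E fj w d (restr G x) := by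
  refine memPwd_of_le hw hx ?_ ?_ ?_
  · intro e; unfold restr; split <;> [exact hx.1 e; exact le_refl 0]
  · intro e; unfold restr; split <;> [exact le_refl _; exact hx.1 e]
  · intro e he; unfold restr; split <;> [exact hx.2.1 e he; rfl]

/-- The support-in-`E` property lets us discard edges outside `E` in sums. -/
lemma vsum_eq_inter_E {x : B × S → ℝ} (hxE : ∀ e ∉ E, x e = 0) (A : Finset (B × S)) :
    vsum x A = vsum x (A ∩ E) := by
  rw [← vsum_inter_diff x A E]
  have : vsum x (A \ E) = 0 :=
    Finset.sum_eq_zero fun e he => hxE e (Finset.mem_sdiff.1 he).2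
  linarith

lemma vsum_le_rkE (hfj : ∀ j : S, IsMonoSubmodular (Ej E j) (fj j))
    (hw : memP E fj w) {x : B × S → ℝ} (hx : memPwd E fj w d x) (F : Finset (B × S)) :
    vsum x F ≤ rk E fj w E := by
  have hFeas := (memPwd_iff_feas hfj hw).1 hx
  calc vsum x F = vsum x (F ∩ E) := vsum_eq_inter_E hFeas.2.1 F
    _ ≤ vsum x E := vsum_mono hFeas.1 Finset.inter_subset_right
    _ ≤ rk E fj w E := hFeas.2.2.1 E (le_refl _)

lemma fwd_nonempty (hw : memP E fj w) (hd : ∀ k, 0 ≤ d k) (F : Finset (B × S)) :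
    Set.Nonempty {r : ℝ | ∃ x : B × S → ℝ, memPwd E fj w d x ∧ r = vsum x F} :=
  ⟨vsum 0 F, 0, memPwd_zero hw hd, rfl⟩

lemma fwd_bddAbove (hfj : ∀ j : S, IsMonoSubmodular (Ej E j) (fj j))
    (hw : memP E fj w) (F : Finset (B × S)) :
    BddAbove {r : ℝ | ∃ x : B × S → ℝ, memPwd E fj w d x ∧ r = vsum x F} := by
  refine ⟨rk E fj w E, ?_⟩
  rintro r ⟨x, hx, rfl⟩
  exact vsum_le_rkE hfj hw hx F

lemma vsum_le_fwd (hfj : ∀ j : S, IsMonoSubmodular (Ej E j) (fj j))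
    (hw : memP E fj w) {x : B × S → ℝ} (hx : memPwd E fj w d x) (F : Finset (B × S)) :
    vsum x F ≤ fwd E fj w d F :=
  le_csSup (fwd_bddAbove hfj hw F) ⟨x, hx, rfl⟩

lemma fwd_le (hw : memP E fj w) (hd : ∀ k, 0 ≤ d k) {F : Finset (B × S)} {c : ℝ}
    (h : ∀ x : B × S → ℝ, memPwd E fj w d x → vsum x F ≤ c) :
    fwd E fj w d F ≤ c := by
  refine csSup_le (fwd_nonempty hw hd F) ?_
  rintro r ⟨x, hx, rfl⟩
  exact h x hx

lemma fwd_nonneg (hw : memP E fj w) (hd : ∀ k, 0 ≤ d k)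
    (hfj : ∀ j : S, IsMonoSubmodular (Ej E j) (fj j)) (F : Finset (B × S)) :
    0 ≤ fwd E fj w d F := by
  have := vsum_le_fwd hfj hw (memPwd_zero hw hd) F
  simpa [vsum] using this

lemma continuous_vsum (F : Finset (B × S)) : Continuous fun x : B × S → ℝ => vsum x F :=
  continuous_finset_sum _ fun e _ => continuous_apply e

lemma isClosed_memPwd : IsClosed {x : B × S → ℝ | memPwd E fj w d x} := by
  have hset : {x : B × S → ℝ | memPwd E fj w d x} =
      (⋂ e, {x : B × S → ℝ | 0 ≤ x e}) ∩
      ((⋂ e, {x : B × S → ℝ | e ∉ E → x e = 0}) ∩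
      ((⋂ e, {x : B × S → ℝ | 0 ≤ (w + x) e}) ∩
      ((⋂ e, {x : B × S → ℝ | e ∉ E → (w + x) e = 0}) ∩
      ((⋂ j, ⋂ F, {x : B × S → ℝ | F ⊆ Ej E j → vsum (w + x) F ≤ fj j F}) ∩
      (⋂ k, {x : B × S → ℝ | vsum x (Ei E k) ≤ d k}))))) := by
    ext x
    simp only [Set.mem_setOf_eq, Set.mem_inter_iff, Set.mem_iInter]
    constructor
    · rintro ⟨h1, h2, ⟨h3, h4, h5⟩, h6⟩
      exact ⟨h1, h2, h3, h4, fun j F hF => h5 j F hF, h6⟩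
    · rintro ⟨h1, h2, h3, h4, h5, h6⟩
      exact ⟨h1, h2, ⟨h3, h4, fun j F hF => h5 j F hF⟩, h6⟩
  rw [hset]
  refine IsClosed.inter (isClosed_iInter fun e => isClosed_le continuous_const (continuous_apply e)) ?_
  refine IsClosed.inter (isClosed_iInter fun e => ?_) ?_
  · by_cases he : e ∈ E
    · have hs : {x : B × S → ℝ | e ∉ E → x e = 0} = Set.univ := by ext x; simp [he]
      rw [hs]; exact isClosed_univ
    · have hs : {x : B × S → ℝ | e ∉ E → x e = 0} = {x : B × S → ℝ | x e = 0} := by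
        ext x; simp [he]
      rw [hs]; exact isClosed_eq (continuous_apply e) continuous_const
  refine IsClosed.inter (isClosed_iInter fun e => ?_) ?_
  · exact isClosed_le continuous_const (continuous_const.add (continuous_apply e))
  refine IsClosed.inter (isClosed_iInter fun e => ?_) ?_
  · by_cases he : e ∈ E
    · have hs : {x : B × S → ℝ | e ∉ E → (w + x) e = 0} = Set.univ := by ext x; simp [he]
      rw [hs]; exact isClosed_univ
    · have hs : {x : B × S → ℝ | e ∉ E → (w + x) e = 0} =
          {x : B × S → ℝ | (w + x) e = 0} := by ext x; simp [he]
      rw [hs]; exact isClosed_eq (continuous_const.add (continuous_apply e)) continuous_const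
  refine IsClosed.inter (isClosed_iInter fun j => isClosed_iInter fun F => ?_) ?_
  · by_cases hF : F ⊆ Ej E j
    · simp only [hF, true_implies]
      refine isClosed_le ?_ continuous_const
      exact continuous_finset_sum _ fun e _ => continuous_const.add (continuous_apply e)
    · have hs : {x : B × S → ℝ | F ⊆ Ej E j → vsum (w + x) F ≤ fj j F} = Set.univ := by
        ext x; simp [hF]
      rw [hs]; exact isClosed_univ
  · exact isClosed_iInter fun k => isClosed_le (continuous_vsum _) continuous_const

lemma memPwd_subset_box (hfj : ∀ j : S, IsMonoSubmodular (Ej E j) (fj j)) (hw : memP E fj w) :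
    {x : B × S → ℝ | memPwd E fj w d x} ⊆
      Set.pi Set.univ fun _ : B × S => Set.Icc (0 : ℝ) (rk E fj w E) := by
  intro x hx e _
  refine ⟨hx.1 e, ?_⟩
  have h1 : vsum x {e} ≤ rk E fj w E := vsum_le_rkE hfj hw hx {e}
  simpa [vsum] using h1

lemma exists_maxOn (hfj : ∀ j : S, IsMonoSubmodular (Ej E j) (fj j)) (hw : memP E fj w)
    {C : Set (B × S → ℝ)} (hC : C ⊆ {x : B × S → ℝ | memPwd E fj w d x})
    (hclosed : IsClosed C) (hne : C.Nonempty) (F : Finset (B × S)) :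
    ∃ x ∈ C, ∀ y ∈ C, vsum y F ≤ vsum x F := by
  have hbox : IsCompact (Set.pi Set.univ fun _ : B × S => Set.Icc (0 : ℝ) (rk E fj w E)) :=
    isCompact_univ_pi fun _ => isCompact_Icc
  have hcomp : IsCompact C :=
    hbox.of_isClosed_subset hclosed (hC.trans (memPwd_subset_box hfj hw))
  obtain ⟨x, hxC, hmax⟩ := hcomp.exists_isMaxOn hne ((continuous_vsum F).continuousOn)
  exact ⟨x, hxC, fun y hy => hmax hy⟩

lemma fwd_attained (hfj : ∀ j : S, IsMonoSubmodular (Ej E j) (fj j)) (hw : memP E fj w)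
    (hd : ∀ k, 0 ≤ d k) (F : Finset (B × S)) :
    ∃ x : B × S → ℝ, memPwd E fj w d x ∧ vsum x F = fwd E fj w d F := by
  obtain ⟨x, hx, hmax⟩ := exists_maxOn hfj hw (le_refl {x : B × S → ℝ | memPwd E fj w d x})
    isClosed_memPwd ⟨0, memPwd_zero hw hd⟩ F
  exact ⟨x, hx, le_antisymm (vsum_le_fwd hfj hw hx F)
    (fwd_le hw hd fun y hy => hmax y hy)⟩

variable (E fj w d)

/-- Demand-side contribution of buyer `k` to a cut `A`. -/
def dterm (A : Finset (B × S)) (k : B) : ℝ := if Ei E k ⊆ A then 0 else d k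

/-- Value of the (normalized) cut `A` for buyer `i`. -/
def Phi (i : B) (A : Finset (B × S)) : ℝ :=
  rk E fj w A + ∑ k ∈ Finset.univ.erase i, dterm E d A k

/-- `min_{F ⊆ A ⊆ E} Phi i A`  (implemented as a min over `A ∪ F`). -/
def h1cut (i : B) (F : Finset (B × S)) : ℝ :=
  (E.powerset).inf' ⟨∅, Finset.empty_mem_powerset E⟩ fun A => Phi E fj w d i (A ∪ F)

/-- The cut version of `f_{w,d}(F ∪ (E - E_i))`. -/
def hstar (i : B) (F : Finset (B × S)) : ℝ :=
  min (h1cut E fj w d i F) (d i + h1cut E fj w d i ∅)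

variable {E fj w d}

lemma dterm_nonneg (hd : ∀ k, 0 ≤ d k) (A : Finset (B × S)) (k : B) :
    0 ≤ dterm E d A k := by
  unfold dterm; split
  · exact le_refl 0
  · exact hd k

lemma dterm_submod (hd : ∀ k, 0 ≤ d k) (A C : Finset (B × S)) (k : B) :
    dterm E d (A ∪ C) k + dterm E d (A ∩ C) k ≤ dterm E d A k + dterm E d C k := by
  unfold dterm
  by_cases hA : Ei E k ⊆ A <;> by_cases hC : Ei E k ⊆ C
  · have h1 : Ei E k ⊆ A ∪ C := hA.trans Finset.subset_union_left
    have h2 : Ei E k ⊆ A ∩ C := Finset.subset_inter hA hC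
    simp [hA, hC, h1, h2]
  · have h1 : Ei E k ⊆ A ∪ C := hA.trans Finset.subset_union_left
    have h2 : ¬ Ei E k ⊆ A ∩ C := fun h => hC (h.trans Finset.inter_subset_right)
    simp [hA, hC, h1, h2]
  · have h1 : Ei E k ⊆ A ∪ C := hC.trans Finset.subset_union_right
    have h2 : ¬ Ei E k ⊆ A ∩ C := fun h => hA (h.trans Finset.inter_subset_left)
    simp [hA, hC, h1, h2]
  · have h2 : ¬ Ei E k ⊆ A ∩ C := fun h => hA (h.trans Finset.inter_subset_left)
    simp only [hA, hC, h2, if_false]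
    split
    · linarith [hd k]
    · linarith [hd k]

lemma dterm_mono (hd : ∀ k, 0 ≤ d k) {A C : Finset (B × S)} (h : A ⊆ C) (k : B) :
    dterm E d C k ≤ dterm E d A k := by
  unfold dterm
  by_cases hA : Ei E k ⊆ A
  · simp [hA, hA.trans h]
  · split
    · exact hd k
    · exact le_refl _

lemma Phi_submod (hfj : ∀ j : S, IsMonoSubmodular (Ej E j) (fj j)) (hd : ∀ k, 0 ≤ d k)
    (i : B) (A C : Finset (B × S)) :
    Phi E fj w d i (A ∪ C) + Phi E fj w d i (A ∩ C) ≤ Phi E fj w d i A + Phi E fj w d i C := by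
  unfold Phi
  have h1 := rk_submod (w := w) hfj A C
  have h2 : ∑ k ∈ Finset.univ.erase i, dterm E d (A ∪ C) k +
      ∑ k ∈ Finset.univ.erase i, dterm E d (A ∩ C) k ≤
      ∑ k ∈ Finset.univ.erase i, dterm E d A k + ∑ k ∈ Finset.univ.erase i, dterm E d C k := by
    rw [← Finset.sum_add_distrib, ← Finset.sum_add_distrib]
    exact Finset.sum_le_sum fun k _ => dterm_submod hd A C k
  linarith

lemma h1cut_le (i : B) {F A : Finset (B × S)} (hA : A ⊆ E) (hFA : F ⊆ A) :
    h1cut E fj w d i F ≤ Phi E fj w d i A := by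
  have := Finset.inf'_le (fun A' => Phi E fj w d i (A' ∪ F))
    (Finset.mem_powerset.2 hA)
  rwa [Finset.union_eq_left.2 hFA] at this

lemma h1cut_exists (i : B) {F : Finset (B × S)} (hF : F ⊆ E) :
    ∃ A, F ⊆ A ∧ A ⊆ E ∧ h1cut E fj w d i F = Phi E fj w d i A := by
  obtain ⟨A, hA, hval⟩ := Finset.exists_mem_eq_inf' ⟨∅, Finset.empty_mem_powerset E⟩
    fun A => Phi E fj w d i (A ∪ F)
  exact ⟨A ∪ F, Finset.subset_union_right,
    Finset.union_subset (Finset.mem_powerset.1 hA) hF, hval⟩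

lemma h1cut_mono (i : B) {F G : Finset (B × S)} (hFG : F ⊆ G) (hG : G ⊆ E) :
    h1cut E fj w d i F ≤ h1cut E fj w d i G := by
  obtain ⟨A, hGA, hAE, hval⟩ := h1cut_exists i hG
  rw [hval]
  exact h1cut_le i hAE (hFG.trans hGA)

lemma h1cut_submod (hfj : ∀ j : S, IsMonoSubmodular (Ej E j) (fj j)) (hd : ∀ k, 0 ≤ d k)
    (i : B) {F G : Finset (B × S)} (hF : F ⊆ E) (hG : G ⊆ E) :
    h1cut E fj w d i (F ∪ G) + h1cut E fj w d i (F ∩ G) ≤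
      h1cut E fj w d i F + h1cut E fj w d i G := by
  obtain ⟨AF, hFA, hAFE, hvalF⟩ := h1cut_exists i hF
  obtain ⟨AG, hGA, hAGE, hvalG⟩ := h1cut_exists i hG
  have h1 : h1cut E fj w d i (F ∪ G) ≤ Phi E fj w d i (AF ∪ AG) :=
    h1cut_le i (Finset.union_subset hAFE hAGE) (Finset.union_subset_union hFA hGA)
  have h2 : h1cut E fj w d i (F ∩ G) ≤ Phi E fj w d i (AF ∩ AG) :=
    h1cut_le i (Finset.inter_subset_left.trans hAFE)
      (Finset.inter_subset_inter hFA hGA)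
  have h3 := Phi_submod (w := w) hfj hd i AF AG
  rw [hvalF, hvalG]
  linarith

lemma hstar_mono (i : B) {F G : Finset (B × S)} (hFG : F ⊆ G) (hG : G ⊆ E) :
    hstar E fj w d i F ≤ hstar E fj w d i G :=
  min_le_min (h1cut_mono i hFG hG) (le_refl _)

lemma hstar_empty (hd : ∀ k, 0 ≤ d k) (i : B) :
    hstar E fj w d i ∅ = h1cut E fj w d i ∅ := by
  unfold hstar
  exact min_eq_left (by linarith [hd i])

lemma hstar_submod (hfj : ∀ j : S, IsMonoSubmodular (Ej E j) (fj j)) (hd : ∀ k, 0 ≤ d k)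
    (i : B) {F G : Finset (B × S)} (hF : F ⊆ E) (hG : G ⊆ E) :
    hstar E fj w d i (F ∪ G) + hstar E fj w d i (F ∩ G) ≤
      hstar E fj w d i F + hstar E fj w d i G := by
  set c := d i + h1cut E fj w d i ∅ with hc
  unfold hstar
  rw [← hc]
  by_cases hFc : h1cut E fj w d i F ≤ c <;> by_cases hGc : h1cut E fj w d i G ≤ c
  · -- both minima are h1cut
    rw [min_eq_left hFc, min_eq_left hGc]
    have h1 := h1cut_submod (w := w) hfj hd i hF hG
    have h2 : min (h1cut E fj w d i (F ∪ G)) c ≤ h1cut E fj w d i (F ∪ G) := min_le_left _ _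
    have h3 : min (h1cut E fj w d i (F ∩ G)) c ≤ h1cut E fj w d i (F ∩ G) := min_le_left _ _
    linarith
  · rw [min_eq_left hFc, min_eq_right (le_of_not_ge hGc)]
    have h2 : min (h1cut E fj w d i (F ∪ G)) c ≤ c := min_le_right _ _
    have h3 : min (h1cut E fj w d i (F ∩ G)) c ≤ h1cut E fj w d i (F ∩ G) := min_le_left _ _
    have h4 : h1cut E fj w d i (F ∩ G) ≤ h1cut E fj w d i F :=
      h1cut_mono i Finset.inter_subset_left hF
    linarith
  · rw [min_eq_right (le_of_not_ge hFc), min_eq_left hGc]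
    have h2 : min (h1cut E fj w d i (F ∪ G)) c ≤ c := min_le_right _ _
    have h3 : min (h1cut E fj w d i (F ∩ G)) c ≤ h1cut E fj w d i (F ∩ G) := min_le_left _ _
    have h4 : h1cut E fj w d i (F ∩ G) ≤ h1cut E fj w d i G :=
      h1cut_mono i Finset.inter_subset_right hG
    linarith
  · rw [min_eq_right (le_of_not_ge hFc), min_eq_right (le_of_not_ge hGc)]
    have h2 : min (h1cut E fj w d i (F ∪ G)) c ≤ c := min_le_right _ _
    have h3 : min (h1cut E fj w d i (F ∩ G)) c ≤ c := min_le_right _ _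
    linarith

lemma T_fiber_bound (hfj : ∀ j : S, IsMonoSubmodular (Ej E j) (fj j)) (hw : memP E fj w)
    (i : B) {T : Finset (B × S)} (hT : T ⊆ E) (hTi : T ∩ Ei E i = ∅)
    {A : Finset (B × S)} (hTk : ∀ k, k ≠ i → ¬ Ei E k ⊆ A → True)
    {x : B × S → ℝ} (hx : memPwd E fj w d x)
    (hdisj : ∀ k, Ei E k ⊆ A → T ∩ Ei E k = ∅) :
    vsum x T ≤ ∑ k ∈ Finset.univ.erase i, dterm E d A k := by
  have hFeas := (memPwd_iff_feas hfj hw).1 hx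
  have hfib : vsum x T = ∑ k : B, vsum x (T ∩ Ei E k) := vsum_fiber_buyer E x hT
  have hterm : ∀ k : B, k ≠ i → vsum x (T ∩ Ei E k) ≤ dterm E d A k := by
    intro k _
    unfold dterm
    split
    · rename_i h
      rw [hdisj k h]
      simp [vsum]
    · calc vsum x (T ∩ Ei E k) ≤ vsum x (Ei E k) :=
            vsum_mono hFeas.1 Finset.inter_subset_right
        _ ≤ d k := hFeas.2.2.2 k
  have hi : vsum x (T ∩ Ei E i) = 0 := by rw [hTi]; simp [vsum]
  calc vsum x T = vsum x (T ∩ Ei E i) + ∑ k ∈ Finset.univ.erase i, vsum x (T ∩ Ei E k) := by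
        rw [hfib]
        exact (Finset.add_sum_erase _ _ (Finset.mem_univ i)).symm
    _ = ∑ k ∈ Finset.univ.erase i, vsum x (T ∩ Ei E k) := by rw [hi]; ring
    _ ≤ ∑ k ∈ Finset.univ.erase i, dterm E d A k :=
        Finset.sum_le_sum fun k hk => hterm k (Finset.ne_of_mem_erase hk)

lemma weak_duality_main (hfj : ∀ j : S, IsMonoSubmodular (Ej E j) (fj j)) (hw : memP E fj w)
    (i : B) {F : Finset (B × S)} (hFi : F ⊆ Ei E i) {A : Finset (B × S)} (hA : A ⊆ E)
    (hFA : F ⊆ A) {x : B × S → ℝ} (hx : memPwd E fj w d x) :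
    vsum x (F ∪ (E \ Ei E i)) ≤ Phi E fj w d i A := by
  have hFeas := (memPwd_iff_feas hfj hw).1 hx
  set G := F ∪ (E \ Ei E i) with hG
  have hGE : G ⊆ E := Finset.union_subset (hFi.trans (Ei_subset E i)) (Finset.sdiff_subset)
  have hsplit : vsum x (G ∩ A) + vsum x (G \ A) = vsum x G := vsum_inter_diff x G A
  have h1 : vsum x (G ∩ A) ≤ rk E fj w A :=
    (vsum_mono hFeas.1 Finset.inter_subset_right).trans (hFeas.2.2.1 A hA)
  have hT : G \ A ⊆ E := (Finset.sdiff_subset).trans hGE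
  have hTi : (G \ A) ∩ Ei E i = ∅ := by
    rw [Finset.eq_empty_iff_forall_notMem]
    rintro e he
    rw [Finset.mem_inter, Finset.mem_sdiff, hG, Finset.mem_union] at he
    obtain ⟨⟨hFe | hEe, hnA⟩, hEi⟩ := he
    · exact hnA (hFA hFe)
    · exact (Finset.mem_sdiff.1 hEe).2 hEi
  have hdisj : ∀ k, Ei E k ⊆ A → (G \ A) ∩ Ei E k = ∅ := by
    intro k hk
    rw [Finset.eq_empty_iff_forall_notMem]
    rintro e he
    rw [Finset.mem_inter, Finset.mem_sdiff] at he
    exact he.1.2 (hk he.2)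
  have h2 : vsum x (G \ A) ≤ ∑ k ∈ Finset.univ.erase i, dterm E d A k :=
    T_fiber_bound hfj hw i hT hTi (fun _ _ _ => trivial) hx hdisj
  unfold Phi
  linarith

lemma weak_duality_di (hfj : ∀ j : S, IsMonoSubmodular (Ej E j) (fj j)) (hw : memP E fj w)
    (i : B) {F : Finset (B × S)} (hFi : F ⊆ Ei E i) {A : Finset (B × S)} (hA : A ⊆ E)
    {x : B × S → ℝ} (hx : memPwd E fj w d x) :
    vsum x (F ∪ (E \ Ei E i)) ≤ d i + Phi E fj w d i A := by
  have hFeas := (memPwd_iff_feas hfj hw).1 hx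
  set G := F ∪ (E \ Ei E i) with hG
  have hGE : G ⊆ E := Finset.union_subset (hFi.trans (Ei_subset E i)) (Finset.sdiff_subset)
  have hsplit : vsum x (G ∩ A) + vsum x (G \ A) = vsum x G := vsum_inter_diff x G A
  have h1 : vsum x (G ∩ A) ≤ rk E fj w A :=
    (vsum_mono hFeas.1 Finset.inter_subset_right).trans (hFeas.2.2.1 A hA)
  -- split G \ A into the Eᵢ part and the rest
  have hT : G \ A ⊆ E := (Finset.sdiff_subset).trans hGE
  set T := (G \ A) \ Ei E i with hTdef
  have hsplit2 : vsum x ((G \ A) ∩ Ei E i) + vsum x T = vsum x (G \ A) :=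
    vsum_inter_diff x (G \ A) (Ei E i)
  have hEi : vsum x ((G \ A) ∩ Ei E i) ≤ d i :=
    (vsum_mono hFeas.1 Finset.inter_subset_right).trans (hFeas.2.2.2 i)
  have hTE : T ⊆ E := (Finset.sdiff_subset).trans hT
  have hTi : T ∩ Ei E i = ∅ := by
    rw [Finset.eq_empty_iff_forall_notMem]
    rintro e he
    rw [Finset.mem_inter, hTdef, Finset.mem_sdiff] at he
    exact he.1.2 he.2
  have hdisj : ∀ k, Ei E k ⊆ A → T ∩ Ei E k = ∅ := by
    intro k hk
    rw [Finset.eq_empty_iff_forall_notMem]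
    rintro e he
    rw [Finset.mem_inter, hTdef, Finset.mem_sdiff, Finset.mem_sdiff] at he
    exact he.1.1.2 (hk he.2)
  have h2 : vsum x T ≤ ∑ k ∈ Finset.univ.erase i, dterm E d A k :=
    T_fiber_bound hfj hw i hTE hTi (fun _ _ _ => trivial) hx hdisj
  unfold Phi
  linarith

lemma fwd_le_hstar (hfj : ∀ j : S, IsMonoSubmodular (Ej E j) (fj j)) (hw : memP E fj w)
    (hd : ∀ k, 0 ≤ d k) (i : B) {F : Finset (B × S)} (hFi : F ⊆ Ei E i) :
    fwd E fj w d (F ∪ (E \ Ei E i)) ≤ hstar E fj w d i F := by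
  have hFE : F ⊆ E := hFi.trans (Ei_subset E i)
  refine le_min ?_ ?_
  · refine Finset.le_inf' _ _ fun A hA => ?_
    refine fwd_le hw hd fun x hx => ?_
    exact weak_duality_main hfj hw i hFi
      (Finset.union_subset (Finset.mem_powerset.1 hA) hFE) Finset.subset_union_right hx
  · have : fwd E fj w d (F ∪ (E \ Ei E i)) - d i ≤ h1cut E fj w d i ∅ := by
      refine Finset.le_inf' _ _ fun A hA => ?_
      rw [sub_le_iff_le_add']
      refine fwd_le hw hd fun x hx => ?_
      have := weak_duality_di hfj hw i hFi
        (Finset.union_subset (Finset.mem_powerset.1 hA) (Finset.empty_subset E)) hx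
      simpa using this
    linarith

lemma fwd_EX_le (hfj : ∀ j : S, IsMonoSubmodular (Ej E j) (fj j)) (hw : memP E fj w)
    (hd : ∀ k, 0 ≤ d k) {A A₀ : Finset (B × S)} (hA : A ⊆ E) (hA₀ : A₀ ⊆ E)
    {K : Finset B} (hK : ∀ k ∈ K, Ei E k ⊆ A) :
    fwd E fj w d (EX E K) ≤ rk E fj w (A ∩ A₀) + ∑ k ∈ K, dterm E d A₀ k := by
  refine fwd_le hw hd fun x hx => ?_
  have hFeas := (memPwd_iff_feas hfj hw).1 hx
  have hEXE : EX E K ⊆ E := Finset.filter_subset _ _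
  have hsplit : vsum x (EX E K ∩ (A ∩ A₀)) + vsum x (EX E K \ (A ∩ A₀)) = vsum x (EX E K) :=
    vsum_inter_diff x _ _
  have h1 : vsum x (EX E K ∩ (A ∩ A₀)) ≤ rk E fj w (A ∩ A₀) :=
    (vsum_mono hFeas.1 Finset.inter_subset_right).trans
      (hFeas.2.2.1 _ (Finset.inter_subset_left.trans hA))
  set T := EX E K \ (A ∩ A₀) with hTdef
  have hTE : T ⊆ E := Finset.sdiff_subset.trans hEXE
  have hTmem : ∀ e ∈ T, e.1 ∈ K ∧ e ∉ A₀ := by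
    intro e he
    rw [hTdef, Finset.mem_sdiff] at he
    obtain ⟨heX, heA⟩ := he
    rw [EX, Finset.mem_filter] at heX
    refine ⟨heX.2, fun hcon => ?_⟩
    have heAmem : e ∈ A := hK e.1 heX.2 (by rw [Ei, Finset.mem_filter]; exact ⟨heX.1, rfl⟩)
    exact heA (Finset.mem_inter.2 ⟨heAmem, hcon⟩)
  have hfib : vsum x T = ∑ k : B, vsum x (T ∩ Ei E k) := vsum_fiber_buyer E x hTE
  have hzero : ∀ k ∉ K, vsum x (T ∩ Ei E k) = 0 := by
    intro k hk
    have : T ∩ Ei E k = ∅ := by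
      rw [Finset.eq_empty_iff_forall_notMem]
      intro e he
      rw [Finset.mem_inter] at he
      have h1 := (hTmem e he.1).1
      have h2 : e.1 = k := (Finset.mem_filter.1 he.2).2
      exact hk (h2 ▸ h1)
    rw [this]; simp [vsum]
  have hbound : ∀ k ∈ K, vsum x (T ∩ Ei E k) ≤ dterm E d A₀ k := by
    intro k _
    unfold dterm
    split
    · rename_i hsub
      have : T ∩ Ei E k = ∅ := by
        rw [Finset.eq_empty_iff_forall_notMem]
        intro e he
        rw [Finset.mem_inter] at he
        exact (hTmem e he.1).2 (hsub he.2)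
      rw [this]; simp [vsum]
    · exact (vsum_mono hFeas.1 Finset.inter_subset_right).trans (hFeas.2.2.2 k)
  have h2 : vsum x T ≤ ∑ k ∈ K, dterm E d A₀ k := by
    rw [hfib, ← Finset.sum_subset (Finset.subset_univ K) (fun k _ hk => hzero k hk)]
    exact Finset.sum_le_sum hbound
  linarith

lemma lgq (hfj : ∀ j : S, IsMonoSubmodular (Ej E j) (fj j)) (hw : memP E fj w)
    (hd : ∀ k, 0 ≤ d k) (i : B) {A : Finset (B × S)} (hA : A ⊆ E)
    {K : Finset B} (hiK : i ∉ K) (hK : ∀ k ∈ K, Ei E k ⊆ A) :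
    hstar E fj w d i (Ei E i ∩ A) + fwd E fj w d (EX E K) ≤
      rk E fj w A + hstar E fj w d i ∅ := by
  obtain ⟨A₀, -, hA₀E, hval₀⟩ := h1cut_exists (E := E) (fj := fj) (w := w) (d := d) i
    (Finset.empty_subset E)
  have piece1 : hstar E fj w d i (Ei E i ∩ A) ≤ Phi E fj w d i (A ∪ A₀) :=
    (min_le_left _ _).trans
      (h1cut_le i (Finset.union_subset hA hA₀E)
        (Finset.inter_subset_right.trans Finset.subset_union_left))
  have piece2 : fwd E fj w d (EX E K) ≤ rk E fj w (A ∩ A₀) + ∑ k ∈ K, dterm E d A₀ k :=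
    fwd_EX_le hfj hw hd hA hA₀E hK
  have piece3 : ∑ k ∈ Finset.univ.erase i, dterm E d (A ∪ A₀) k + ∑ k ∈ K, dterm E d A₀ k ≤
      ∑ k ∈ Finset.univ.erase i, dterm E d A₀ k := by
    have hKsub : K ⊆ Finset.univ.erase i := by
      intro k hk
      exact Finset.mem_erase.2 ⟨fun hcon => hiK (hcon ▸ hk), Finset.mem_univ k⟩
    have hrw : ∑ k ∈ K, dterm E d A₀ k =
        ∑ k ∈ Finset.univ.erase i, if k ∈ K then dterm E d A₀ k else 0 := by
      rw [Finset.sum_ite_mem]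
      rw [Finset.inter_eq_right.2 hKsub]
    rw [hrw, ← Finset.sum_add_distrib]
    refine Finset.sum_le_sum fun k hk => ?_
    by_cases hkK : k ∈ K
    · have : dterm E d (A ∪ A₀) k = 0 := by
        unfold dterm
        rw [if_pos ((hK k hkK).trans Finset.subset_union_left)]
      rw [this, if_pos hkK]; linarith
    · rw [if_neg hkK, add_zero]
      exact dterm_mono hd Finset.subset_union_right k
  have hsub := rk_submod (w := w) hfj A A₀
  have hPhi : Phi E fj w d i (A ∪ A₀) =
      rk E fj w (A ∪ A₀) + ∑ k ∈ Finset.univ.erase i, dterm E d (A ∪ A₀) k := rfl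
  have hfin : hstar E fj w d i ∅ = Phi E fj w d i A₀ := by
    rw [hstar_empty hd, hval₀]
  rw [hfin]
  unfold Phi at hPhi piece1 ⊢
  linarith [piece1, piece2, piece3, hsub]

open scoped Classical

variable (E fj w)

/-- A tight set for a feasible point `x`. -/
def TightSet (x : B × S → ℝ) (A : Finset (B × S)) : Prop :=
  A ⊆ E ∧ vsum x A = rk E fj w A

/-- An edge contained in some tight set. -/
def Blocked (x : B × S → ℝ) (e : B × S) : Prop :=
  ∃ A, TightSet E fj w x A ∧ e ∈ A

/-- The minimal tight set containing `e` (meaningful when `e` is blocked). -/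
def Smin (x : B × S → ℝ) (e : B × S) : Finset (B × S) :=
  E.filter fun a => ∀ A, TightSet E fj w x A → e ∈ A → a ∈ A

variable {E fj w}

lemma tight_union_inter (hfj : ∀ j : S, IsMonoSubmodular (Ej E j) (fj j))
    {x : B × S → ℝ} (hx3 : ∀ A ⊆ E, vsum x A ≤ rk E fj w A)
    {A C : Finset (B × S)} (hA : TightSet E fj w x A) (hC : TightSet E fj w x C) :
    TightSet E fj w x (A ∪ C) ∧ TightSet E fj w x (A ∩ C) := by
  have hUE : A ∪ C ⊆ E := Finset.union_subset hA.1 hC.1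
  have hIE : A ∩ C ⊆ E := Finset.inter_subset_left.trans hA.1
  have h1 : vsum x (A ∪ C) ≤ rk E fj w (A ∪ C) := hx3 _ hUE
  have h2 : vsum x (A ∩ C) ≤ rk E fj w (A ∩ C) := hx3 _ hIE
  have h3 := vsum_union_inter x A C
  have h4 := rk_submod (w := w) hfj A C
  constructor
  · exact ⟨hUE, by linarith [hA.2, hC.2]⟩
  · exact ⟨hIE, by linarith [hA.2, hC.2]⟩

lemma tight_empty (hfj : ∀ j : S, IsMonoSubmodular (Ej E j) (fj j)) (x : B × S → ℝ) :
    TightSet E fj w x ∅ :=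
  ⟨Finset.empty_subset E, by simp [vsum, rk_empty hfj]⟩

lemma mem_Smin_self {x : B × S → ℝ} {e : B × S} (hbl : Blocked E fj w x e) :
    e ∈ Smin E fj w x e := by
  obtain ⟨A, hA, heA⟩ := hbl
  exact Finset.mem_filter.2 ⟨hA.1 heA, fun A' hA' he' => he'⟩

lemma Smin_subset {x : B × S → ℝ} {e : B × S} {A : Finset (B × S)}
    (hA : TightSet E fj w x A) (heA : e ∈ A) : Smin E fj w x e ⊆ A :=
  fun a ha => (Finset.mem_filter.1 ha).2 A hA heA

lemma Smin_subset_E (x : B × S → ℝ) (e : B × S) : Smin E fj w x e ⊆ E :=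
  Finset.filter_subset _ _

lemma Smin_tight (hfj : ∀ j : S, IsMonoSubmodular (Ej E j) (fj j))
    {x : B × S → ℝ} (hx3 : ∀ A ⊆ E, vsum x A ≤ rk E fj w A)
    {e : B × S} (hbl : Blocked E fj w x e) : TightSet E fj w x (Smin E fj w x e) := by
  obtain ⟨A₁, hA₁, heA₁⟩ := hbl
  set 𝔉 := (E.powerset).filter (fun A => TightSet E fj w x A ∧ e ∈ A) with h𝔉
  have hne : 𝔉.Nonempty := ⟨A₁, Finset.mem_filter.2 ⟨Finset.mem_powerset.2 hA₁.1, hA₁, heA₁⟩⟩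
  have hmem𝔉 : ∀ A ∈ 𝔉, TightSet E fj w x A ∧ e ∈ A := fun A hA => (Finset.mem_filter.1 hA).2
  -- the inf' of the family is tight
  have key : ∀ (s : Finset (Finset (B × S))) (hs : s.Nonempty),
      (∀ A ∈ s, TightSet E fj w x A) → TightSet E fj w x (s.inf' hs id) := by
    intro s hs
    induction hs using Finset.Nonempty.cons_induction with
    | singleton a => intro h; simpa using h a (Finset.mem_singleton_self a)
    | cons a s ha hs ih =>
      intro h
      rw [Finset.inf'_cons]
      have h1 : TightSet E fj w x a := h a (Finset.mem_cons_self a s)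
      have h2 : TightSet E fj w x (s.inf' hs id) :=
        ih fun A hA => h A (Finset.mem_cons.2 (Or.inr hA))
      have := (tight_union_inter hfj hx3 h1 h2).2
      exact this
  have htight : TightSet E fj w x (𝔉.inf' hne id) :=
    key 𝔉 hne fun A hA => (hmem𝔉 A hA).1
  -- Smin equals the inf'
  have heq : Smin E fj w x e = 𝔉.inf' hne id := by
    apply Finset.Subset.antisymm
    · intro a ha
      obtain ⟨haE, hpred⟩ := Finset.mem_filter.1 ha
      have : ({a} : Finset (B × S)) ≤ 𝔉.inf' hne id := by
        refine Finset.le_inf' hne _ fun A hA => ?_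
        simp only [id]
        rw [Finset.le_iff_subset, Finset.singleton_subset_iff]
        exact hpred A (hmem𝔉 A hA).1 (hmem𝔉 A hA).2
      exact Finset.singleton_subset_iff.1 this
    · intro a ha
      have hforall : ∀ A ∈ 𝔉, a ∈ A := fun A hA =>
        (Finset.inf'_le id hA : 𝔉.inf' hne id ≤ A) ha
      refine Finset.mem_filter.2 ⟨hA₁.1 (hforall A₁ (Finset.mem_filter.2
        ⟨Finset.mem_powerset.2 hA₁.1, hA₁, heA₁⟩)), ?_⟩
      intro A hA heA
      exact hforall A (Finset.mem_filter.2 ⟨Finset.mem_powerset.2 hA.1, hA, heA⟩)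
  rw [heq]
  exact htight

lemma tight_biUnion (hfj : ∀ j : S, IsMonoSubmodular (Ej E j) (fj j))
    {x : B × S → ℝ} (hx3 : ∀ A ⊆ E, vsum x A ≤ rk E fj w A)
    (s : Finset (B × S)) (t : (B × S) → Finset (B × S))
    (ht : ∀ e ∈ s, TightSet E fj w x (t e)) :
    TightSet E fj w x (s.biUnion t) := by
  induction s using Finset.induction with
  | empty => simpa using tight_empty hfj x
  | insert a s hnotmem ih =>
    rw [Finset.biUnion_insert]
    exact (tight_union_inter hfj hx3 (ht a (Finset.mem_insert_self a s))
      (ih fun e he => ht e (Finset.mem_insert_of_mem he))).1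

def minpos (s : Finset ℝ) : ℝ := (insert 1 s).min' (Finset.insert_nonempty 1 s)

lemma minpos_pos {s : Finset ℝ} (h : ∀ r ∈ s, 0 < r) : 0 < minpos s := by
  have hmem := Finset.min'_mem (insert 1 s) (Finset.insert_nonempty 1 s)
  rcases Finset.mem_insert.1 hmem with h1 | h2
  · rw [minpos, h1]; norm_num
  · exact h _ h2

lemma minpos_le {s : Finset ℝ} {r : ℝ} (hr : r ∈ s) : minpos s ≤ r :=
  Finset.min'_le _ _ (Finset.mem_insert_of_mem hr)

lemma minpos_le_one (s : Finset ℝ) : minpos s ≤ 1 :=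
  Finset.min'_le _ _ (Finset.mem_insert_self 1 s)

lemma vsum_smul_add (x ν : B × S → ℝ) (δ : ℝ) (A : Finset (B × S)) :
    vsum (fun h => x h + δ * ν h) A = vsum x A + δ * vsum ν A := by
  simp [vsum, Finset.sum_add_distrib, Finset.mul_sum]

/-- Key perturbation lemma: if a direction `ν` respects all tight constraints, then a
small positive step along `ν` stays feasible. -/
lemma exists_perturb (hfj : ∀ j : S, IsMonoSubmodular (Ej E j) (fj j)) (hw : memP E fj w)
    {x ν : B × S → ℝ} (hx : memPwd E fj w d x)
    (hsupp : ∀ h ∉ E, ν h = 0)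
    (htight : ∀ A, TightSet E fj w x A → vsum ν A ≤ 0)
    (hneg : ∀ h, ν h < 0 → 0 < x h)
    (hcapv : ∀ k, vsum x (Ei E k) = d k → vsum ν (Ei E k) ≤ 0) :
    ∃ δ : ℝ, 0 < δ ∧
      ∀ δ', 0 < δ' → δ' ≤ δ → memPwd E fj w d (fun h => x h + δ' * ν h) := by
  have hFeas := (memPwd_iff_feas hfj hw).1 hx
  set s1 : Finset ℝ := (E.powerset.filter (fun A => 0 < vsum ν A)).image
    (fun A => (rk E fj w A - vsum x A) / vsum ν A) with hs1
  set s2 : Finset ℝ := (Finset.univ.filter (fun h : B × S => ν h < 0)).image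
    (fun h => x h / (-ν h)) with hs2
  set s3 : Finset ℝ := (Finset.univ.filter (fun k : B => 0 < vsum ν (Ei E k))).image
    (fun k => (d k - vsum x (Ei E k)) / vsum ν (Ei E k)) with hs3
  set δ := minpos (s1 ∪ s2 ∪ s3) with hδ
  have hδpos : 0 < δ := by
    refine minpos_pos fun r hr => ?_
    rcases Finset.mem_union.1 hr with hr' | hr3
    · rcases Finset.mem_union.1 hr' with hr1 | hr2
      · obtain ⟨A, hA, rfl⟩ := Finset.mem_image.1 hr1
        obtain ⟨hAE, hνA⟩ := Finset.mem_filter.1 hA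
        have hAE' : A ⊆ E := Finset.mem_powerset.1 hAE
        have hle : vsum x A ≤ rk E fj w A := hFeas.2.2.1 A hAE'
        have hne : vsum x A ≠ rk E fj w A := fun hcon =>
          absurd (htight A ⟨hAE', hcon⟩) (not_le.2 hνA)
        exact div_pos (by cases lt_or_eq_of_le hle with
          | inl h => linarith
          | inr h => exact absurd h hne) hνA
      · obtain ⟨h, hh, rfl⟩ := Finset.mem_image.1 hr2
        have hνh : ν h < 0 := (Finset.mem_filter.1 hh).2
        exact div_pos (hneg h hνh) (by linarith)
    · obtain ⟨k, hk, rfl⟩ := Finset.mem_image.1 hr3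
      have hνk : 0 < vsum ν (Ei E k) := (Finset.mem_filter.1 hk).2
      have hle : vsum x (Ei E k) ≤ d k := hFeas.2.2.2 k
      have hne : vsum x (Ei E k) ≠ d k := fun hcon =>
        absurd (hcapv k hcon) (not_le.2 hνk)
      exact div_pos (by cases lt_or_eq_of_le hle with
        | inl h => linarith
        | inr h => exact absurd h hne) hνk
  refine ⟨δ, hδpos, fun δ' hδ'pos hδ'le => ?_⟩
  refine (memPwd_iff_feas hfj hw).2 ⟨?_, ?_, ?_, ?_⟩
  · intro h
    show 0 ≤ x h + δ' * ν h
    rcases le_or_gt 0 (ν h) with hν | hν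
    · exact add_nonneg (hFeas.1 h) (mul_nonneg hδ'pos.le hν)
    · have hmem : x h / (-ν h) ∈ s2 := Finset.mem_image.2
        ⟨h, Finset.mem_filter.2 ⟨Finset.mem_univ h, hν⟩, rfl⟩
      have : δ' ≤ x h / (-ν h) := hδ'le.trans (minpos_le (by
        exact Finset.mem_union.2 (Or.inl (Finset.mem_union.2 (Or.inr hmem)))))
      rw [le_div_iff₀ (by linarith : (0:ℝ) < -ν h)] at this
      nlinarith
  · intro h hh
    show x h + δ' * ν h = 0
    rw [hFeas.2.1 h hh, hsupp h hh]
    ring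
  · intro A hAE
    rw [vsum_smul_add]
    rcases le_or_gt (vsum ν A) 0 with hν | hν
    · have : δ' * vsum ν A ≤ 0 := mul_nonpos_of_nonneg_of_nonpos hδ'pos.le hν
      linarith [hFeas.2.2.1 A hAE]
    · have hmem : (rk E fj w A - vsum x A) / vsum ν A ∈ s1 := Finset.mem_image.2
        ⟨A, Finset.mem_filter.2 ⟨Finset.mem_powerset.2 hAE, hν⟩, rfl⟩
      have : δ' ≤ (rk E fj w A - vsum x A) / vsum ν A := hδ'le.trans (minpos_le (by
        exact Finset.mem_union.2 (Or.inl (Finset.mem_union.2 (Or.inl hmem)))))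
      rw [le_div_iff₀ hν] at this
      nlinarith
  · intro k
    rw [vsum_smul_add]
    rcases le_or_gt (vsum ν (Ei E k)) 0 with hν | hν
    · have : δ' * vsum ν (Ei E k) ≤ 0 := mul_nonpos_of_nonneg_of_nonpos hδ'pos.le hν
      linarith [hFeas.2.2.2 k]
    · have hmem : (d k - vsum x (Ei E k)) / vsum ν (Ei E k) ∈ s3 := Finset.mem_image.2
        ⟨k, Finset.mem_filter.2 ⟨Finset.mem_univ k, hν⟩, rfl⟩
      have : δ' ≤ (d k - vsum x (Ei E k)) / vsum ν (Ei E k) := hδ'le.trans (minpos_le (by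
        exact Finset.mem_union.2 (Or.inr hmem)))
      rw [le_div_iff₀ hν] at this
      nlinarith

/-- Reachability relation for augmenting the total mass on `G`. -/
inductive ReachM (E : Finset (B × S)) (fj : S → Finset (B × S) → ℝ) (w : B × S → ℝ)
    (d : B → ℝ) (x : B × S → ℝ) (G : Finset (B × S)) : (B × S) → Prop
  | base (e : B × S) (heG : e ∈ G) (hslack : vsum x (Ei E e.1) < d e.1) :
      ReachM E fj w d x G e
  | step (e f e' : B × S) (he : ReachM E fj w d x G e) (hf : f ∈ Smin E fj w x e)
      (hxf : 0 < x f) (he' : e' ∈ G) (hbuy : e'.1 = f.1) : ReachM E fj w d x G e'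

lemma reachM_mem_G {x : B × S → ℝ} {G : Finset (B × S)} {e : B × S}
    (h : ReachM E fj w d x G e) : e ∈ G := by
  cases h <;> assumption

lemma mem_Ei_iff {e : B × S} {k : B} : e ∈ Ei E k ↔ e ∈ E ∧ e.1 = k := by
  simp [Ei, Finset.mem_filter]

lemma reachM_inv {x : B × S → ℝ} {G : Finset (B × S)}
    (hsupp : ∀ h ∉ G, x h = 0) (hGE : G ⊆ E) {e : B × S}
    (hre : ReachM E fj w d x G e) :
    ∃ ν : B × S → ℝ,
      (∀ A, TightSet E fj w x A → vsum ν A ≤ (if e ∈ A then 1 else 0)) ∧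
      (∀ k, vsum x (Ei E k) = d k → vsum ν (Ei E k) ≤ 0) ∧
      (∀ h, ν h < 0 → 0 < x h) ∧
      (∀ h ∉ G, ν h = 0) ∧
      vsum ν G = 1 := by
  induction hre with
  | base e heG hslack =>
    refine ⟨fun h => if h = e then 1 else 0, ?_, ?_, ?_, ?_, ?_⟩
    · intro A _
      rw [show vsum (fun h => if h = e then 1 else 0) A = if e ∈ A then 1 else 0 from
        Finset.sum_ite_eq' A e (fun _ => 1)]
    · intro k hk
      rw [show vsum (fun h => if h = e then 1 else 0) (Ei E k) =
        if e ∈ Ei E k then 1 else 0 from Finset.sum_ite_eq' _ e (fun _ => 1)]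
      split
      · rename_i hmem
        have : e.1 = k := (mem_Ei_iff.1 hmem).2
        rw [← this] at hk
        linarith
      · exact le_refl 0
    · intro h hcon
      by_cases hhe : h = e <;> simp [hhe] at hcon <;> linarith
    · intro h hh
      have : h ≠ e := fun hcon => hh (hcon ▸ heG)
      simp [this]
    · rw [show vsum (fun h => if h = e then 1 else 0) G = if e ∈ G then 1 else 0 from
        Finset.sum_ite_eq' _ e (fun _ => 1)]
      simp [heG]
  | step e f e' hre hf hxf he' hbuy ih =>
    obtain ⟨ν, I1, I2, I3, I4, I5⟩ := ih
    have hfE : f ∈ E := (Smin_subset_E x e) hf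
    have hfG : f ∈ G := by
      by_contra hcon
      rw [hsupp f hcon] at hxf
      exact lt_irrefl 0 hxf
    have hfprop : ∀ A, TightSet E fj w x A → e ∈ A → f ∈ A :=
      fun A hA heA => (Finset.mem_filter.1 hf).2 A hA heA
    set ν' : B × S → ℝ := fun h => ν h + ((if h = e' then 1 else 0) - (if h = f then 1 else 0))
      with hν'
    have hsum : ∀ A : Finset (B × S), vsum ν' A =
        vsum ν A + ((if e' ∈ A then 1 else 0) - (if f ∈ A then 1 else 0)) := by
      intro A
      rw [hν']
      unfold vsum
      rw [Finset.sum_add_distrib, Finset.sum_sub_distrib,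
        Finset.sum_ite_eq' A e' (fun _ => (1:ℝ)), Finset.sum_ite_eq' A f (fun _ => (1:ℝ))]
    refine ⟨ν', ?_, ?_, ?_, ?_, ?_⟩
    · intro A hA
      rw [hsum]
      by_cases heA : e ∈ A
      · have hfA : f ∈ A := hfprop A hA heA
        have := I1 A hA
        rw [if_pos heA] at this
        rw [if_pos hfA]
        split <;> linarith
      · have := I1 A hA
        rw [if_neg heA] at this
        split
        · rename_i h1
          split <;> linarith
        · rename_i h1
          split <;> linarith
    · intro k hk
      rw [hsum]
      have hiff : (e' ∈ Ei E k) ↔ (f ∈ Ei E k) := by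
        rw [mem_Ei_iff, mem_Ei_iff]
        constructor
        · rintro ⟨-, h2⟩; exact ⟨hfE, hbuy ▸ h2⟩
        · rintro ⟨-, h2⟩; exact ⟨hGE he', hbuy.trans h2⟩
      have := I2 k hk
      by_cases hm : f ∈ Ei E k
      · rw [if_pos hm, if_pos (hiff.2 hm)]; linarith
      · rw [if_neg hm, if_neg (fun hcon => hm (hiff.1 hcon))]; linarith
    · intro h hcon
      by_cases hhf : h = f
      · rw [hhf]; exact hxf
      · apply I3
        rw [hν'] at hcon
        simp only [if_neg hhf, sub_zero] at hcon
        by_cases hhe' : h = e'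
        · simp only [if_pos hhe'] at hcon; linarith
        · simp only [if_neg hhe'] at hcon; linarith
    · intro h hh
      have h1 : h ≠ e' := fun hcon => hh (hcon ▸ he')
      have h2 : h ≠ f := fun hcon => hh (hcon ▸ hfG)
      rw [hν']
      simp [h1, h2, I4 h hh]
    · rw [hsum, if_pos he', if_pos hfG, I5]
      ring

lemma reachM_blocked (hfj : ∀ j : S, IsMonoSubmodular (Ej E j) (fj j)) (hw : memP E fj w)
    {x : B × S → ℝ} {G : Finset (B × S)} (hx : memPwd E fj w d x) (hGE : G ⊆ E)
    (hsupp : ∀ h ∉ G, x h = 0)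
    (hopt : ∀ y, memPwd E fj w d y → vsum y G ≤ vsum x G)
    {e : B × S} (hre : ReachM E fj w d x G e) : Blocked E fj w x e := by
  by_contra hnb
  obtain ⟨ν, I1, I2, I3, I4, I5⟩ := reachM_inv hsupp hGE hre
  have htight' : ∀ A, TightSet E fj w x A → vsum ν A ≤ 0 := by
    intro A hA
    have := I1 A hA
    rcases Finset.decidableMem e A with heA | heA
    · rwa [if_neg heA] at this
    · exact absurd ⟨A, hA, heA⟩ hnb
  have hsupp' : ∀ h ∉ E, ν h = 0 := fun h hh => I4 h (fun hcon => hh (hGE hcon))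
  obtain ⟨δ, hδpos, hmem⟩ := exists_perturb hfj hw hx hsupp' htight' I3 I2
  have hy := hmem δ hδpos (le_refl δ)
  have := hopt _ hy
  rw [vsum_smul_add, I5] at this
  nlinarith

lemma fwd_eq_hstar (hfj : ∀ j : S, IsMonoSubmodular (Ej E j) (fj j)) (hw : memP E fj w)
    (hd : ∀ k, 0 ≤ d k) (i : B) {F : Finset (B × S)} (hFi : F ⊆ Ei E i) :
    fwd E fj w d (F ∪ (E \ Ei E i)) = hstar E fj w d i F := by
  refine le_antisymm (fwd_le_hstar hfj hw hd i hFi) ?_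
  set G := F ∪ (E \ Ei E i) with hGdef
  have hGE : G ⊆ E := Finset.union_subset (hFi.trans (Ei_subset E i)) Finset.sdiff_subset
  obtain ⟨x₁, hx₁, hx₁val⟩ := fwd_attained hfj hw hd G
  set x := restr G x₁ with hxdef
  have hxmem : memPwd E fj w d x := memPwd_restr hw hx₁ G
  have hxG : vsum x G = fwd E fj w d G := by
    rw [hxdef, vsum_restr, Finset.inter_self]; exact hx₁val
  have hsupp : ∀ h ∉ G, x h = 0 := fun h hh => if_neg hh
  have hopt : ∀ y, memPwd E fj w d y → vsum y G ≤ vsum x G := fun y hy => by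
    rw [hxG]; exact vsum_le_fwd hfj hw hy G
  have hFeas := (memPwd_iff_feas hfj hw).1 hxmem
  have hx3 := hFeas.2.2.1
  have hbl : ∀ e, ReachM E fj w d x G e → Blocked E fj w x e := fun e hre =>
    reachM_blocked hfj hw hxmem hGE hsupp hopt hre
  set RE := E.filter (fun e => ReachM E fj w d x G e) with hREdef
  set Astar := RE.biUnion (fun e => Smin E fj w x e) with hAstardef
  have htA : TightSet E fj w x Astar :=
    tight_biUnion hfj hx3 RE _ (fun e he => Smin_tight hfj hx3 (hbl e (Finset.mem_filter.1 he).2))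
  have hAE : Astar ⊆ E := htA.1
  have hreachA : ∀ e, ReachM E fj w d x G e → e ∈ Astar := by
    intro e hre
    have heG := reachM_mem_G hre
    exact Finset.mem_biUnion.2 ⟨e, Finset.mem_filter.2 ⟨hGE heG, hre⟩,
      mem_Smin_self (hbl e hre)⟩
  set Kstar := Finset.univ.filter (fun k : B => ¬ (Ei E k ∩ G ⊆ Astar)) with hKstardef
  have hKtight : ∀ k ∈ Kstar, vsum x (Ei E k) = d k := by
    intro k hk
    obtain ⟨e, he, heA⟩ := Finset.not_subset.1 (Finset.mem_filter.1 hk).2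
    rcases eq_or_lt_of_le (hFeas.2.2.2 k) with h | h
    · exact h
    · exfalso
      have heEi := Finset.mem_inter.1 he
      have hek : e.1 = k := (mem_Ei_iff.1 heEi.1).2
      have hre : ReachM E fj w d x G e := ReachM.base e heEi.2 (by rw [hek]; exact h)
      exact heA (hreachA e hre)
  have hclosure : ∀ f, f ∈ Astar → 0 < x f → Ei E f.1 ∩ G ⊆ Astar := by
    intro f hfA hxf e' he'
    obtain ⟨e₀, he₀, hfS⟩ := Finset.mem_biUnion.1 hfA
    have he'm := Finset.mem_inter.1 he'
    have hre' : ReachM E fj w d x G e' := ReachM.step e₀ f e' (Finset.mem_filter.1 he₀).2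
      hfS hxf he'm.2 (mem_Ei_iff.1 he'm.1).2
    exact hreachA e' hre'
  have hinterzero : ∀ k ∈ Kstar, vsum x (Ei E k ∩ Astar) = 0 := by
    intro k hk
    refine Finset.sum_eq_zero fun f hf => ?_
    by_contra hne
    have hpos : 0 < x f := lt_of_le_of_ne (hFeas.1 f) (Ne.symm hne)
    have hfm := Finset.mem_inter.1 hf
    have hfk : f.1 = k := (mem_Ei_iff.1 hfm.1).2
    have := hclosure f hfm.2 hpos
    rw [hfk] at this
    exact (Finset.mem_filter.1 hk).2 this
  have houtzero : ∀ e ∈ E, e ∉ Astar → e.1 ∉ Kstar → x e = 0 := by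
    intro e heE heA hek
    by_contra hne
    have hpos : 0 < x e := lt_of_le_of_ne (hFeas.1 e) (Ne.symm hne)
    have heG : e ∈ G := by
      by_contra hcon; rw [hsupp e hcon] at hpos; exact lt_irrefl 0 hpos
    have : ¬ (Ei E e.1 ∩ G ⊆ Astar) := fun hsub =>
      heA (hsub (Finset.mem_inter.2 ⟨mem_Ei_iff.2 ⟨heE, rfl⟩, heG⟩))
    exact hek (Finset.mem_filter.2 ⟨Finset.mem_univ _, this⟩)
  have hsplit : vsum x Astar + vsum x (E \ Astar) = vsum x E := by
    have h := vsum_inter_diff x E Astar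
    rwa [Finset.inter_eq_right.2 hAE] at h
  have hfib : vsum x (E \ Astar) = ∑ k : B, vsum x ((E \ Astar) ∩ Ei E k) :=
    vsum_fiber_buyer E x Finset.sdiff_subset
  have hterm0 : ∀ k ∉ Kstar, vsum x ((E \ Astar) ∩ Ei E k) = 0 := by
    intro k hk
    refine Finset.sum_eq_zero fun e he => ?_
    have hem := Finset.mem_inter.1 he
    have heE := Finset.mem_sdiff.1 hem.1
    have hek : e.1 = k := (mem_Ei_iff.1 hem.2).2
    exact houtzero e heE.1 heE.2 (hek ▸ hk)
  have htermd : ∀ k ∈ Kstar, vsum x ((E \ Astar) ∩ Ei E k) = d k := by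
    intro k hk
    have h1 : (E \ Astar) ∩ Ei E k = Ei E k \ Astar := by
      ext e
      simp only [Finset.mem_inter, Finset.mem_sdiff]
      constructor
      · rintro ⟨⟨h1, h2⟩, h3⟩; exact ⟨h3, h2⟩
      · rintro ⟨h1, h2⟩; exact ⟨⟨(Ei_subset E k) h1, h2⟩, h1⟩
    have h2 := vsum_inter_diff x (Ei E k) Astar
    rw [h1]
    have h3 := hinterzero k hk
    have h4 := hKtight k hk
    linarith
  have hsumK : vsum x (E \ Astar) = ∑ k ∈ Kstar, d k := by
    rw [hfib, ← Finset.sum_subset (Finset.subset_univ Kstar)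
      (fun k _ hk => hterm0 k hk)]
    exact Finset.sum_congr rfl htermd
  have hvalue : fwd E fj w d G = rk E fj w Astar + ∑ k ∈ Kstar, d k := by
    have hxE : vsum x G = vsum x E :=
      Finset.sum_subset hGE (fun e _ heG => hsupp e heG)
    rw [← hxG, hxE, ← hsplit, htA.2, hsumK]
  have hEk_subG : ∀ k, k ≠ i → Ei E k ⊆ G := by
    intro k hki e he
    have hm := mem_Ei_iff.1 he
    refine Finset.mem_union_right _ (Finset.mem_sdiff.2 ⟨hm.1, fun hcon => ?_⟩)
    exact hki (hm.2 ▸ (mem_Ei_iff.1 hcon).2 ▸ rfl)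
  have hdt : ∀ k ∈ Finset.univ.erase i, dterm E d Astar k ≤ if k ∈ Kstar then d k else 0 := by
    intro k hk
    have hki : k ≠ i := Finset.ne_of_mem_erase hk
    unfold dterm
    split
    · split
      · exact hd k
      · exact le_refl 0
    · rename_i hns
      have hkK : k ∈ Kstar := by
        refine Finset.mem_filter.2 ⟨Finset.mem_univ _, fun hcon => ?_⟩
        rw [Finset.inter_eq_left.2 (hEk_subG k hki)] at hcon
        exact hns hcon
      rw [if_pos hkK]
  have hdtsum : ∑ k ∈ Finset.univ.erase i, dterm E d Astar k ≤ ∑ k ∈ Kstar.erase i, d k := by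
    calc ∑ k ∈ Finset.univ.erase i, dterm E d Astar k
        ≤ ∑ k ∈ Finset.univ.erase i, (if k ∈ Kstar then d k else 0) :=
          Finset.sum_le_sum hdt
      _ = ∑ k ∈ (Finset.univ.erase i) ∩ Kstar, d k := Finset.sum_ite_mem _ _ _
      _ = ∑ k ∈ Kstar.erase i, d k := by
          congr 1
          ext k
          simp only [Finset.mem_inter, Finset.mem_erase, Finset.mem_univ, true_and]
          tauto
  by_cases hiK : i ∈ Kstar
  · have h1 : hstar E fj w d i F ≤ d i + h1cut E fj w d i ∅ := min_le_right _ _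
    have h2 : h1cut E fj w d i ∅ ≤ Phi E fj w d i Astar :=
      h1cut_le i hAE (Finset.empty_subset _)
    have h3 : ∑ k ∈ Kstar, d k = d i + ∑ k ∈ Kstar.erase i, d k :=
      (Finset.add_sum_erase _ _ hiK).symm
    rw [hvalue]
    unfold Phi at h2
    linarith
  · have hFA : F ⊆ Astar := by
      intro e heF
      have hsub : Ei E i ∩ G ⊆ Astar := by
        by_contra hcon
        exact hiK (Finset.mem_filter.2 ⟨Finset.mem_univ _, hcon⟩)
      exact hsub (Finset.mem_inter.2 ⟨hFi heF, Finset.mem_union_left _ heF⟩)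
    have h1 : hstar E fj w d i F ≤ h1cut E fj w d i F := min_le_left _ _
    have h2 : h1cut E fj w d i F ≤ Phi E fj w d i Astar := h1cut_le i hAE hFA
    have h3 : Kstar.erase i = Kstar := Finset.erase_eq_of_notMem hiK
    rw [hvalue]
    unfold Phi at h2
    rw [h3] at hdtsum
    linarith

/-- Reachability relation for rerouting while preserving all buyers' totals. -/
inductive ReachD (E : Finset (B × S)) (fj : S → Finset (B × S) → ℝ) (w : B × S → ℝ)
    (x : B × S → ℝ) (i : B) (e₀ : B × S) : (B × S) → Prop
  | base : ReachD E fj w x i e₀ e₀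
  | step (e f e' : B × S) (he : ReachD E fj w x i e₀ e) (hf : f ∈ Smin E fj w x e)
      (hxf : 0 < x f) (hfi : f ∉ Ei E i) (he' : e' ∈ Ei E f.1) : ReachD E fj w x i e₀ e'

lemma reachD_inv {x : B × S → ℝ} {i : B} {e₀ : B × S} (hE0 : e₀ ∈ Ei E i)
    {e : B × S} (hre : ReachD E fj w x i e₀ e) :
    ∃ ν : B × S → ℝ,
      (∀ A, TightSet E fj w x A → vsum ν A ≤ (if e ∈ A then 1 else 0)) ∧
      (∀ k, k ≠ i → vsum ν (Ei E k) = 0) ∧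
      (∀ h, ν h < 0 → 0 < x h ∧ h ∉ Ei E i) ∧
      (∀ h ∉ E, ν h = 0) ∧
      (ν e₀ = 1 ∧ ∀ h ∈ Ei E i, h ≠ e₀ → ν h = 0) := by
  have he₀i : e₀.1 = i := (mem_Ei_iff.1 hE0).2
  induction hre with
  | base =>
    refine ⟨fun h => if h = e₀ then 1 else 0, ?_, ?_, ?_, ?_, ?_, ?_⟩
    · intro A _
      rw [show vsum (fun h => if h = e₀ then 1 else 0) A = if e₀ ∈ A then 1 else 0 from
        Finset.sum_ite_eq' A e₀ (fun _ => 1)]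
    · intro k hk
      rw [show vsum (fun h => if h = e₀ then 1 else 0) (Ei E k) =
        if e₀ ∈ Ei E k then 1 else 0 from Finset.sum_ite_eq' _ e₀ (fun _ => 1)]
      rw [if_neg (fun hcon => hk ((he₀i ▸ (mem_Ei_iff.1 hcon).2).symm ▸ rfl))]
    · intro h hcon
      by_cases hhe : h = e₀ <;> simp [hhe] at hcon <;> linarith
    · intro h hh
      have : h ≠ e₀ := fun hcon => hh (hcon ▸ (Ei_subset E i) hE0)
      simp [this]
    · simp
    · intro h _ hne
      simp [hne]
  | step e f e' hre hf hxf hfi he' ih =>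
    obtain ⟨ν, I1, I2, I3, I4, I5⟩ := ih
    have hfE : f ∈ E := (Smin_subset_E x e) hf
    have hfprop : ∀ A, TightSet E fj w x A → e ∈ A → f ∈ A :=
      fun A hA heA => (Finset.mem_filter.1 hf).2 A hA heA
    have hf1i : f.1 ≠ i := fun hcon => hfi (mem_Ei_iff.2 ⟨hfE, hcon⟩)
    have he'E : e' ∈ E := (Ei_subset E f.1) he'
    have he'1 : e'.1 = f.1 := (mem_Ei_iff.1 he').2
    have he'i : e' ∉ Ei E i := fun hcon => hf1i (he'1 ▸ (mem_Ei_iff.1 hcon).2)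
    have hfe₀ : f ≠ e₀ := fun hcon => hfi (hcon ▸ hE0)
    have he'e₀ : e' ≠ e₀ := fun hcon => he'i (hcon ▸ hE0)
    set ν' : B × S → ℝ := fun h => ν h + ((if h = e' then 1 else 0) - (if h = f then 1 else 0))
      with hν'
    have hsum : ∀ A : Finset (B × S), vsum ν' A =
        vsum ν A + ((if e' ∈ A then 1 else 0) - (if f ∈ A then 1 else 0)) := by
      intro A
      rw [hν']
      unfold vsum
      rw [Finset.sum_add_distrib, Finset.sum_sub_distrib,
        Finset.sum_ite_eq' A e' (fun _ => (1:ℝ)), Finset.sum_ite_eq' A f (fun _ => (1:ℝ))]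
    refine ⟨ν', ?_, ?_, ?_, ?_, ?_, ?_⟩
    · intro A hA
      rw [hsum]
      by_cases heA : e ∈ A
      · have hfA : f ∈ A := hfprop A hA heA
        have := I1 A hA
        rw [if_pos heA] at this
        rw [if_pos hfA]
        split <;> linarith
      · have := I1 A hA
        rw [if_neg heA] at this
        split
        · split <;> linarith
        · split <;> linarith
    · intro k hk
      rw [hsum, I2 k hk]
      have hiff : (e' ∈ Ei E k) ↔ (f ∈ Ei E k) := by
        rw [mem_Ei_iff, mem_Ei_iff]
        constructor
        · rintro ⟨-, h2⟩; exact ⟨hfE, he'1 ▸ h2⟩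
        · rintro ⟨-, h2⟩; exact ⟨he'E, he'1.trans h2⟩
      by_cases hm : f ∈ Ei E k
      · rw [if_pos hm, if_pos (hiff.2 hm)]; ring
      · rw [if_neg hm, if_neg (fun hcon => hm (hiff.1 hcon))]; ring
    · intro h hcon
      by_cases hhf : h = f
      · exact hhf ▸ ⟨hxf, hfi⟩
      · apply I3
        rw [hν'] at hcon
        simp only [if_neg hhf, sub_zero] at hcon
        by_cases hhe' : h = e'
        · simp only [if_pos hhe'] at hcon; linarith
        · simp only [if_neg hhe'] at hcon; linarith
    · intro h hh
      have h1 : h ≠ e' := fun hcon => hh (hcon ▸ he'E)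
      have h2 : h ≠ f := fun hcon => hh (hcon ▸ hfE)
      rw [hν']
      simp [h1, h2, I4 h hh]
    · rw [hν']
      simp only [if_neg (Ne.symm he'e₀), if_neg (Ne.symm hfe₀)]
      rw [I5.1]
      ring
    · intro h hhEi hne
      rw [hν']
      have h1 : h ≠ e' := fun hcon => he'i (hcon ▸ hhEi)
      have h2 : h ≠ f := fun hcon => hfi (hcon ▸ hhEi)
      simp [h1, h2, I5.2 h hhEi hne]

lemma vsum_EX (y : B × S → ℝ) (K : Finset B) :
    vsum y (EX E K) = ∑ k ∈ K, vsum y (Ei E k) := by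
  have hsub : EX E K ⊆ E := Finset.filter_subset _ _
  have hfib : vsum y (EX E K) = ∑ k : B, vsum y (EX E K ∩ Ei E k) :=
    vsum_fiber_buyer E y hsub
  have hterm : ∀ k : B, EX E K ∩ Ei E k = if k ∈ K then Ei E k else ∅ := by
    intro k
    split
    · rename_i hk
      rw [Finset.inter_eq_right]
      intro e he
      obtain ⟨heE, he1⟩ := mem_Ei_iff.1 he
      exact Finset.mem_filter.2 ⟨heE, he1 ▸ hk⟩
    · rename_i hk
      rw [Finset.eq_empty_iff_forall_notMem]
      intro e he
      obtain ⟨heX, heI⟩ := Finset.mem_inter.1 he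
      exact hk ((mem_Ei_iff.1 heI).2 ▸ (Finset.mem_filter.1 heX).2)
  rw [hfib, ← Finset.sum_subset (Finset.subset_univ K)]
  · exact Finset.sum_congr rfl fun k hk => by rw [hterm k, if_pos hk]
  · intro k _ hk
    rw [hterm k, if_neg hk]
    simp [vsum]

lemma isClosed_exchangeC (i : B) (ζ : B × S → ℝ) (c : B → ℝ) :
    IsClosed {x' : B × S → ℝ | memPwd E fj w d x' ∧ (∀ e ∈ Ei E i, x' e ≤ ζ e) ∧
      ∀ k, k ≠ i → vsum x' (Ei E k) = c k} := by
  have hset : {x' : B × S → ℝ | memPwd E fj w d x' ∧ (∀ e ∈ Ei E i, x' e ≤ ζ e) ∧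
      ∀ k, k ≠ i → vsum x' (Ei E k) = c k} =
      {x' : B × S → ℝ | memPwd E fj w d x'} ∩
      ((⋂ e, {x' : B × S → ℝ | e ∈ Ei E i → x' e ≤ ζ e}) ∩
      (⋂ k, {x' : B × S → ℝ | k ≠ i → vsum x' (Ei E k) = c k})) := by
    ext x'
    simp only [Set.mem_setOf_eq, Set.mem_inter_iff, Set.mem_iInter]
  rw [hset]
  refine isClosed_memPwd.inter (IsClosed.inter ?_ ?_)
  · refine isClosed_iInter fun e => ?_
    by_cases he : e ∈ Ei E i
    · have hs : {x' : B × S → ℝ | e ∈ Ei E i → x' e ≤ ζ e} =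
          {x' : B × S → ℝ | x' e ≤ ζ e} := by ext x'; simp [he]
      rw [hs]; exact isClosed_le (continuous_apply e) continuous_const
    · have hs : {x' : B × S → ℝ | e ∈ Ei E i → x' e ≤ ζ e} = Set.univ := by
        ext x'; simp [he]
      rw [hs]; exact isClosed_univ
  · refine isClosed_iInter fun k => ?_
    by_cases hk : k = i
    · have hs : {x' : B × S → ℝ | k ≠ i → vsum x' (Ei E k) = c k} = Set.univ := by
        ext x'; simp [hk]
      rw [hs]; exact isClosed_univ
    · have hs : {x' : B × S → ℝ | k ≠ i → vsum x' (Ei E k) = c k} =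
          {x' : B × S → ℝ | vsum x' (Ei E k) = c k} := by ext x'; simp [hk]
      rw [hs]; exact isClosed_eq (continuous_vsum _) continuous_const

/-- The key exchange lemma: if `ζ` is dominated by the marginal cut function, then `ζ` can be
given to buyer `i` while preserving every other buyer's total. -/
lemma exchange_exists (hfj : ∀ j : S, IsMonoSubmodular (Ej E j) (fj j)) (hw : memP E fj w)
    (hd : ∀ k, 0 ≤ d k) (i : B) {ζ : B × S → ℝ}
    (hζ0 : ∀ e, 0 ≤ ζ e) (hζE : ∀ e ∉ Ei E i, ζ e = 0)
    (hg : ∀ F ⊆ Ei E i, vsum ζ F + hstar E fj w d i ∅ ≤ hstar E fj w d i F)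
    {x₀ : B × S → ℝ} (hx₀ : memPwd E fj w d x₀) (hx₀i : ∀ e ∈ Ei E i, x₀ e = 0) :
    ∃ x', memPwd E fj w d x' ∧ (∀ e ∈ Ei E i, x' e = ζ e) ∧
      ∀ k, k ≠ i → vsum x' (Ei E k) = vsum x₀ (Ei E k) := by
  have hζdi : vsum ζ (Ei E i) ≤ d i := by
    have h1 := hg (Ei E i) (le_refl _)
    have h2 : hstar E fj w d i (Ei E i) ≤ d i + h1cut E fj w d i ∅ := min_le_right _ _
    have h3 := hstar_empty (E := E) (fj := fj) (w := w) hd i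
    linarith
  set C : Set (B × S → ℝ) := {x' | memPwd E fj w d x' ∧ (∀ e ∈ Ei E i, x' e ≤ ζ e) ∧
      ∀ k, k ≠ i → vsum x' (Ei E k) = vsum x₀ (Ei E k)} with hCdef
  have hCsub : C ⊆ {x' : B × S → ℝ | memPwd E fj w d x'} := fun x' hx' => hx'.1
  have hCne : C.Nonempty := ⟨x₀, hx₀, fun e he => (hx₀i e he) ▸ hζ0 e, fun k _ => rfl⟩
  obtain ⟨x', hx'C, hmax⟩ := exists_maxOn hfj hw hCsub (isClosed_exchangeC i ζ _) hCne (Ei E i)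
  obtain ⟨hx'mem, hx'le, hx'tot⟩ := hx'C
  have hFeas' := (memPwd_iff_feas hfj hw).1 hx'mem
  have hall : ∀ e ∈ Ei E i, x' e = ζ e := by
    by_contra hcon
    push_neg at hcon
    obtain ⟨e₀, he₀, hne⟩ := hcon
    have hlt : x' e₀ < ζ e₀ := lt_of_le_of_ne (hx'le e₀ he₀) hne
    have he₀E : e₀ ∈ E := (Ei_subset E i) he₀
    have hsumlt : vsum x' (Ei E i) < vsum ζ (Ei E i) :=
      Finset.sum_lt_sum (fun e he => hx'le e he) ⟨e₀, he₀, hlt⟩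
    have hnotdi : vsum x' (Ei E i) ≠ d i := fun h => by linarith
    -- every reachable edge is blocked
    have hbl : ∀ e, ReachD E fj w x' i e₀ e → Blocked E fj w x' e := by
      intro e hre
      by_contra hnb
      obtain ⟨ν, I1, I2, I3, I4, I5⟩ := reachD_inv he₀ hre
      have htight' : ∀ A, TightSet E fj w x' A → vsum ν A ≤ 0 := by
        intro A hA
        have := I1 A hA
        by_cases heA : e ∈ A
        · exact absurd ⟨A, hA, heA⟩ hnb
        · rwa [if_neg heA] at this
      have hneg' : ∀ h, ν h < 0 → 0 < x' h := fun h hh => (I3 h hh).1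
      have hcapv : ∀ k, vsum x' (Ei E k) = d k → vsum ν (Ei E k) ≤ 0 := by
        intro k hk
        by_cases hki : k = i
        · exact absurd (hki ▸ hk) hnotdi
        · rw [I2 k hki]
      obtain ⟨δ, hδpos, hmem⟩ := exists_perturb hfj hw hx'mem I4 htight' hneg' hcapv
      set δ'' := min δ (ζ e₀ - x' e₀) with hδ''def
      have hδ''pos : 0 < δ'' := lt_min hδpos (by linarith)
      have hymem := hmem δ'' hδ''pos (min_le_left _ _)
      have hνEi : vsum ν (Ei E i) = 1 := by
        have h1 : vsum ν (Ei E i) = ν e₀ + ∑ h ∈ (Ei E i).erase e₀, ν h :=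
          (Finset.add_sum_erase _ _ he₀).symm
        have h2 : ∑ h ∈ (Ei E i).erase e₀, ν h = 0 :=
          Finset.sum_eq_zero fun h hh =>
            I5.2 h (Finset.mem_of_mem_erase hh) (Finset.ne_of_mem_erase hh)
        rw [h1, h2, I5.1]; ring
      have hyC : (fun h => x' h + δ'' * ν h) ∈ C := by
        refine ⟨hymem, ?_, ?_⟩
        · intro e' he'
          show x' e' + δ'' * ν e' ≤ ζ e'
          by_cases hee : e' = e₀
          · rw [hee, I5.1]
            have : δ'' ≤ ζ e₀ - x' e₀ := min_le_right _ _
            linarith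
          · rw [I5.2 e' he' hee]
            have := hx'le e' he'
            linarith
        · intro k hk
          show vsum (fun h => x' h + δ'' * ν h) (Ei E k) = vsum x₀ (Ei E k)
          rw [vsum_smul_add, I2 k hk, hx'tot k hk]
          ring
      have hobj := hmax _ hyC
      rw [vsum_smul_add, hνEi] at hobj
      nlinarith
    -- the stuck cut
    have hreachE : ∀ e, ReachD E fj w x' i e₀ e → e ∈ E := by
      intro e hre
      cases hre with
      | base => exact he₀E
      | step e₁ f e' he₁ hf hxf hfi he' => exact (Ei_subset E f.1) he'
    set RE := E.filter (fun e => ReachD E fj w x' i e₀ e) with hREdef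
    set Astar := RE.biUnion (fun e => Smin E fj w x' e) with hAstardef
    have htA : TightSet E fj w x' Astar :=
      tight_biUnion hfj hFeas'.2.2.1 RE _
        (fun e he => Smin_tight hfj hFeas'.2.2.1 (hbl e (Finset.mem_filter.1 he).2))
    have hAE : Astar ⊆ E := htA.1
    have hreachA : ∀ e, ReachD E fj w x' i e₀ e → e ∈ Astar := fun e hre =>
      Finset.mem_biUnion.2 ⟨e, Finset.mem_filter.2 ⟨hreachE e hre, hre⟩,
        mem_Smin_self (hbl e hre)⟩
    have he₀A : e₀ ∈ Astar := hreachA e₀ ReachD.base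
    set R := Finset.univ.filter
      (fun k : B => k ≠ i ∧ ∃ f ∈ Astar, 0 < x' f ∧ f ∉ Ei E i ∧ f.1 = k) with hRdef
    have hRsub : ∀ k ∈ R, Ei E k ⊆ Astar := by
      intro k hk e' he'
      obtain ⟨hki, f, hfA, hxf, hfi, hfk⟩ := (Finset.mem_filter.1 hk).2
      obtain ⟨e₁, he₁, hfS⟩ := Finset.mem_biUnion.1 hfA
      have hre' : ReachD E fj w x' i e₀ e' :=
        ReachD.step e₁ f e' (Finset.mem_filter.1 he₁).2 hfS hxf hfi (by rw [hfk]; exact he')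
      exact hreachA e' hre'
    have hiR : i ∉ R := fun hcon => ((Finset.mem_filter.1 hcon).2).1 rfl
    -- mass decomposition of Astar
    have hfib : vsum x' Astar = ∑ k : B, vsum x' (Astar ∩ Ei E k) :=
      vsum_fiber_buyer E x' hAE
    have hzero : ∀ k ∈ Finset.univ.erase i, k ∉ R → vsum x' (Astar ∩ Ei E k) = 0 := by
      intro k hk hkR
      refine Finset.sum_eq_zero fun f hf => ?_
      by_contra hne'
      have hpos : 0 < x' f := lt_of_le_of_ne (hFeas'.1 f) (Ne.symm hne')
      obtain ⟨hfA, hfEi⟩ := Finset.mem_inter.1 hf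
      have hki : k ≠ i := Finset.ne_of_mem_erase hk
      have hfk : f.1 = k := (mem_Ei_iff.1 hfEi).2
      have hfnoti : f ∉ Ei E i := fun hcon => hki ((hfk ▸ (mem_Ei_iff.1 hcon).2) ▸ rfl)
      exact hkR (Finset.mem_filter.2 ⟨Finset.mem_univ _, hki, f, hfA, hpos, hfnoti, hfk⟩)
    have hone : ∀ k ∈ R, vsum x' (Astar ∩ Ei E k) = vsum x₀ (Ei E k) := by
      intro k hk
      rw [Finset.inter_eq_right.2 (hRsub k hk)]
      exact hx'tot k ((Finset.mem_filter.1 hk).2).1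
    have hRsubE : R ⊆ Finset.univ.erase i := fun k hk =>
      Finset.mem_erase.2 ⟨((Finset.mem_filter.1 hk).2).1, Finset.mem_univ _⟩
    have hdecomp : vsum x' Astar =
        vsum x' (Astar ∩ Ei E i) + ∑ k ∈ R, vsum x₀ (Ei E k) := by
      rw [hfib, ← Finset.add_sum_erase _ _ (Finset.mem_univ i)]
      congr 1
      rw [← Finset.sum_subset hRsubE (fun k hk hkR => hzero k hk hkR)]
      exact Finset.sum_congr rfl hone
    -- the contradiction via lgq
    have hgap : vsum x' (Astar ∩ Ei E i) < vsum ζ (Astar ∩ Ei E i) := by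
      refine Finset.sum_lt_sum (fun e he => hx'le e (Finset.mem_inter.1 he).2) ?_
      exact ⟨e₀, Finset.mem_inter.2 ⟨he₀A, he₀⟩, hlt⟩
    have hEXeq : vsum x₀ (EX E R) = ∑ k ∈ R, vsum x₀ (Ei E k) := vsum_EX x₀ R
    have hfwdEX : ∑ k ∈ R, vsum x₀ (Ei E k) ≤ fwd E fj w d (EX E R) := by
      rw [← hEXeq]; exact vsum_le_fwd hfj hw hx₀ _
    have hlgq := lgq hfj hw hd i hAE hiR (fun k hk => hRsub k hk)
    have hgF := hg (Ei E i ∩ Astar) Finset.inter_subset_left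
    rw [Finset.inter_comm] at hgap
    have hfinal : vsum ζ (Ei E i ∩ Astar) ≤ vsum x' (Ei E i ∩ Astar) := by
      have h1 : vsum x' (Ei E i ∩ Astar) =
          rk E fj w Astar - ∑ k ∈ R, vsum x₀ (Ei E k) := by
        rw [Finset.inter_comm]
        have := htA.2
        linarith [hdecomp]
      linarith
    linarith
  exact ⟨x', hx'mem, hall, hx'tot⟩

lemma Ek_subset_sdiff {k i : B} (hk : k ≠ i) : Ei E k ⊆ E \ Ei E i := by
  intro e he
  obtain ⟨heE, he1⟩ := mem_Ei_iff.1 he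
  exact Finset.mem_sdiff.2 ⟨heE, fun hcon => hk (he1 ▸ (mem_Ei_iff.1 hcon).2 ▸ rfl)⟩

lemma vsum_sdiffEi (y : B × S → ℝ) (i : B) :
    vsum y (E \ Ei E i) = ∑ k ∈ Finset.univ.erase i, vsum y (Ei E k) := by
  have hfib : vsum y (E \ Ei E i) = ∑ k : B, vsum y ((E \ Ei E i) ∩ Ei E k) :=
    vsum_fiber_buyer E y Finset.sdiff_subset
  have hterm : ∀ k : B, k ≠ i → (E \ Ei E i) ∩ Ei E k = Ei E k := fun k hk =>
    Finset.inter_eq_right.2 (Ek_subset_sdiff hk)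
  have hi : (E \ Ei E i) ∩ Ei E i = ∅ := by
    rw [Finset.eq_empty_iff_forall_notMem]
    intro e he
    obtain ⟨h1, h2⟩ := Finset.mem_inter.1 he
    exact (Finset.mem_sdiff.1 h1).2 h2
  rw [hfib, ← Finset.add_sum_erase _ _ (Finset.mem_univ i), hi]
  rw [show vsum y (∅ : Finset (B × S)) = 0 from rfl]
  rw [zero_add]
  exact Finset.sum_congr rfl fun k hk => by rw [hterm k (Finset.ne_of_mem_erase hk)]

/-- Any vector dominated by the marginal cut function lies in the clinching polytope. -/
lemma mem_clinchP_of_g (hfj : ∀ j : S, IsMonoSubmodular (Ej E j) (fj j)) (hw : memP E fj w)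
    (hd : ∀ k, 0 ≤ d k) (i : B) {ζ : B × S → ℝ}
    (hζ0 : ∀ e, 0 ≤ ζ e) (hζE : ∀ e ∉ Ei E i, ζ e = 0)
    (hg : ∀ F ⊆ Ei E i, vsum ζ F + hstar E fj w d i ∅ ≤ hstar E fj w d i F) :
    ζ ∈ ClinchP E fj w d i := by
  refine ⟨hζ0, hζE, ?_⟩
  ext u
  constructor
  · rintro ⟨hui, hu0, x, hx, hxEi, hxtot⟩
    refine ⟨hui, hu0, restr (E \ Ei E i) x, memPwd_restr hw hx _, ?_, ?_⟩
    · intro e he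
      have : e ∉ E \ Ei E i := fun hcon => (Finset.mem_sdiff.1 hcon).2 he
      simp [restr, this]
    · intro k hk
      rw [vsum_restr, Finset.inter_eq_left.2 (Ek_subset_sdiff hk)]
      exact hxtot k hk
  · rintro ⟨hui, hu0, x, hx, hxEi, hxtot⟩
    have hxEi' : ∀ e ∈ Ei E i, x e = 0 := fun e he => hxEi e he
    obtain ⟨x', hx'mem, hx'Ei, hx'tot⟩ := exchange_exists hfj hw hd i hζ0 hζE hg hx hxEi'
    exact ⟨hui, hu0, x', hx'mem, hx'Ei, fun k hk => (hx'tot k hk).trans (hxtot k hk)⟩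

/-- Any member of the clinching polytope is dominated by the marginal cut function. -/
lemma clinch_le_g (hfj : ∀ j : S, IsMonoSubmodular (Ej E j) (fj j)) (hw : memP E fj w)
    (hd : ∀ k, 0 ≤ d k) (i : B) {ξ : B × S → ℝ} (hmem : ξ ∈ ClinchP E fj w d i)
    {F : Finset (B × S)} (hFi : F ⊆ Ei E i) :
    vsum ξ F + hstar E fj w d i ∅ ≤ hstar E fj w d i F := by
  obtain ⟨hξ0, hξE, hPi⟩ := hmem
  obtain ⟨x₂, hx₂, hx₂val⟩ := fwd_attained hfj hw hd (E \ Ei E i)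
  set x₀ := restr (E \ Ei E i) x₂ with hx₀def
  have hx₀mem : memPwd E fj w d x₀ := memPwd_restr hw hx₂ _
  have hx₀Ei : ∀ e ∈ Ei E i, x₀ e = 0 := by
    intro e he
    have : e ∉ E \ Ei E i := fun hcon => (Finset.mem_sdiff.1 hcon).2 he
    simp [hx₀def, restr, this]
  have hx₀val : vsum x₀ (E \ Ei E i) = fwd E fj w d (E \ Ei E i) := by
    rw [hx₀def, vsum_restr, Finset.inter_self]
    exact hx₂val
  set u₀ : B → ℝ := fun k => if k = i then 0 else vsum x₀ (Ei E k) with hu₀def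
  have hu₀mem : u₀ ∈ PiWd E fj w d i 0 := by
    refine ⟨if_pos rfl, ?_, x₀, hx₀mem, ?_, ?_⟩
    · intro k
      rw [hu₀def]
      dsimp only
      split
      · exact le_refl 0
      · exact vsum_nonneg hx₀mem.1 _
    · intro e he
      rw [hx₀Ei e he]
      rfl
    · intro k hk
      rw [hu₀def]
      dsimp only
      rw [if_neg hk]
  have hu₀mem' : u₀ ∈ PiWd E fj w d i ξ := by rw [hPi]; exact hu₀mem
  obtain ⟨-, -, x₁, hx₁mem, hx₁Ei, hx₁tot⟩ := hu₀mem'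
  have hx₁F : vsum x₁ F = vsum ξ F :=
    Finset.sum_congr rfl fun e he => hx₁Ei e (hFi he)
  have hsd : vsum x₁ (E \ Ei E i) = vsum x₀ (E \ Ei E i) := by
    rw [vsum_sdiffEi, vsum_sdiffEi]
    refine Finset.sum_congr rfl fun k hk => ?_
    have hki : k ≠ i := Finset.ne_of_mem_erase hk
    rw [hx₁tot k hki, hu₀def]
    dsimp only
    rw [if_neg hki]
  have hdisj : Disjoint F (E \ Ei E i) := by
    rw [Finset.disjoint_left]
    intro e he1 he2
    exact (Finset.mem_sdiff.1 he2).2 (hFi he1)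
  have hunion : vsum x₁ (F ∪ (E \ Ei E i)) = vsum x₁ F + vsum x₁ (E \ Ei E i) :=
    Finset.sum_union hdisj
  have h1 : vsum x₁ (F ∪ (E \ Ei E i)) ≤ fwd E fj w d (F ∪ (E \ Ei E i)) :=
    vsum_le_fwd hfj hw hx₁mem _
  have h2 : fwd E fj w d (F ∪ (E \ Ei E i)) = hstar E fj w d i F :=
    fwd_eq_hstar hfj hw hd i hFi
  have h3 : fwd E fj w d (E \ Ei E i) = hstar E fj w d i ∅ := by
    have := fwd_eq_hstar hfj hw hd i (Finset.empty_subset (Ei E i))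
    rwa [Finset.empty_union] at this
  linarith

end CoreProof

/-- a maximal element `ξ` of the clinching polytope satisfies
`ξ(E_i) = f_{w,d}(E) - f_{w,d}(E \ E_i)`. -/
theorem maximal_clinch_amount
    (E : Finset (B × S)) (fj : S → Finset (B × S) → ℝ)
    (hfj : ∀ j : S, IsMonoSubmodular (Ej E j) (fj j))
    (w : B × S → ℝ) (hw : memP E fj w)
    (d : B → ℝ) (hd : ∀ i : B, 0 ≤ d i)
    (i : B) (ξ : B × S → ℝ) (hmem : ξ ∈ ClinchP E fj w d i)
    (hmax : ∀ ξ' ∈ ClinchP E fj w d i, (∀ e, ξ e ≤ ξ' e) → ξ' = ξ) :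
    vsum ξ (Ei E i) = fwd E fj w d E - fwd E fj w d (E \ Ei E i) := by
  classical
  have hEiE : Ei E i ⊆ E := Ei_subset E i
  set g : Finset (B × S) → ℝ := fun F => hstar E fj w d i F - hstar E fj w d i ∅ with hgdef
  have hC2 : ∀ F ⊆ Ei E i, vsum ξ F ≤ g F := by
    intro F hF
    have := clinch_le_g hfj hw hd i hmem hF
    rw [hgdef]
    dsimp only
    linarith
  have hgsub : ∀ {F G : Finset (B × S)}, F ⊆ Ei E i → G ⊆ Ei E i →
      g (F ∪ G) + g (F ∩ G) ≤ g F + g G := by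
    intro F G hF hG
    have := hstar_submod (w := w) hfj hd i (hF.trans hEiE) (hG.trans hEiE)
    rw [hgdef]
    dsimp only
    linarith
  set fam := (Ei E i).powerset.filter (fun F => vsum ξ F = g F) with hfamdef
  set Tbar := fam.sup id with hTbardef
  have hTprop : Tbar ⊆ Ei E i ∧ vsum ξ Tbar = g Tbar := by
    refine Finset.sup_induction (p := fun A => A ⊆ Ei E i ∧ vsum ξ A = g A) ?_ ?_ ?_
    · refine ⟨Finset.empty_subset _, ?_⟩
      rw [hgdef]
      dsimp only
      simp [vsum]
    · rintro A ⟨hA1, hA2⟩ C ⟨hC1, hC2'⟩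
      rw [Finset.sup_eq_union]
      refine ⟨Finset.union_subset hA1 hC1, ?_⟩
      have h1 := hC2 (A ∪ C) (Finset.union_subset hA1 hC1)
      have h2 := hC2 (A ∩ C) (Finset.inter_subset_left.trans hA1)
      have h3 := hgsub hA1 hC1
      have h4 := vsum_union_inter ξ A C
      linarith
    · intro F hF
      exact ⟨Finset.mem_powerset.1 (Finset.mem_filter.1 hF).1, (Finset.mem_filter.1 hF).2⟩
  suffices hEq : vsum ξ (Ei E i) = g (Ei E i) by
    rw [hEq, hgdef]
    dsimp only
    have h2 : fwd E fj w d (Ei E i ∪ (E \ Ei E i)) = hstar E fj w d i (Ei E i) :=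
      fwd_eq_hstar hfj hw hd i (le_refl (Ei E i))
    have h3 : fwd E fj w d (E \ Ei E i) = hstar E fj w d i ∅ := by
      have := fwd_eq_hstar hfj hw hd i (Finset.empty_subset (Ei E i))
      rwa [Finset.empty_union] at this
    rw [← h2, ← h3, Finset.union_sdiff_of_subset hEiE]
  by_contra hne
  have hTne : Tbar ≠ Ei E i := fun hcon => hne (hcon ▸ hTprop.2)
  obtain ⟨e₀, he₀Ei, he₀T⟩ :=
    Finset.exists_of_ssubset (ssubset_of_subset_of_ne hTprop.1 hTne)
  set fam2 := (Ei E i).powerset.filter (fun F => e₀ ∈ F) with hfam2def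
  set ε := minpos (fam2.image (fun F => g F - vsum ξ F)) with hεdef
  have hεpos : 0 < ε := by
    refine minpos_pos fun r hr => ?_
    obtain ⟨F, hF, rfl⟩ := Finset.mem_image.1 hr
    obtain ⟨hFp, hFe⟩ := Finset.mem_filter.1 hF
    have hFEi := Finset.mem_powerset.1 hFp
    have hle := hC2 F hFEi
    have hneF : vsum ξ F ≠ g F := by
      intro hcon
      have hFfam : F ∈ fam := Finset.mem_filter.2 ⟨hFp, hcon⟩
      have : F ⊆ Tbar := Finset.le_iff_subset.1 (Finset.le_sup (f := id) hFfam)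
      exact he₀T (this hFe)
    linarith [lt_of_le_of_ne hle hneF]
  set ξ' : B × S → ℝ := fun e => ξ e + (if e = e₀ then ε else 0) with hξ'def
  have hξ'0 : ∀ e, 0 ≤ ξ' e := by
    intro e
    rw [hξ'def]
    dsimp only
    split
    · linarith [hmem.1 e]
    · linarith [hmem.1 e]
  have hξ'E : ∀ e ∉ Ei E i, ξ' e = 0 := by
    intro e he
    rw [hξ'def]
    dsimp only
    rw [if_neg (fun hcon : e = e₀ => he (hcon ▸ he₀Ei)), hmem.2.1 e he]
    ring
  have hg' : ∀ F ⊆ Ei E i, vsum ξ' F + hstar E fj w d i ∅ ≤ hstar E fj w d i F := by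
    intro F hF
    have hsum : vsum ξ' F = vsum ξ F + (if e₀ ∈ F then ε else 0) := by
      rw [hξ'def]
      unfold vsum
      rw [Finset.sum_add_distrib, Finset.sum_ite_eq' F e₀ (fun _ => ε)]
    by_cases he : e₀ ∈ F
    · have hmem2 : g F - vsum ξ F ∈ fam2.image (fun F => g F - vsum ξ F) :=
        Finset.mem_image.2 ⟨F, Finset.mem_filter.2 ⟨Finset.mem_powerset.2 hF, he⟩, rfl⟩
      have hεle := minpos_le hmem2
      rw [hsum, if_pos he]
      rw [hgdef] at hεle
      dsimp only at hεle
      linarith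
    · rw [hsum, if_neg he, add_zero]
      have := hC2 F hF
      rw [hgdef] at this
      dsimp only at this
      linarith
  have hξ'mem := mem_clinchP_of_g hfj hw hd i hξ'0 hξ'E hg'
  have hle : ∀ e, ξ e ≤ ξ' e := by
    intro e
    rw [hξ'def]
    dsimp only
    split
    · linarith
    · linarith
  have heq := hmax ξ' hξ'mem hle
  have heval : ξ' e₀ = ξ e₀ := by rw [heq]
  rw [hξ'def] at heval
  simp at heval
  linarith

end TwoSidedMarket
end
end

section
/- For Y ⊆ N define g̃_{w,d}(Y) := min_{Z ⊆ Y} ( f_w(E_Z) + d(Y \ Z) ), and call Z ⊆ Y a minimizer for Y if it attains this minimum. Then for X ⊆ N the following are equivalent: (i) X is the unique inclusion-minimal minimizer for X itself (in which case g̃_{w,d}(X) = f_w(E_X)); (ii) X is an inclusion-minimal minimizer for some Y with X ⊆ Y ⊆ N. -/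
open Finset

noncomputable section

namespace TwoSidedMarket

variable {B S : Type*} [Fintype B] [Fintype S] [DecidableEq B] [DecidableEq S]

/-- `g̃_{w,d}(Y) := min_{Z ⊆ Y} (f_w(E_Z) + d(Y \ Z))`. -/
def gTil (E : Finset (B × S)) (fj : S → Finset (B × S) → ℝ)
    (w : B × S → ℝ) (d : B → ℝ) (Y : Finset B) : ℝ :=
  Y.powerset.inf' ⟨∅, Finset.empty_mem_powerset _⟩
    (fun Z => fw E fj w (EX E Z) + ∑ k ∈ Y \ Z, d k)

/-- `Z` is a minimizer for `Y` in the definition of `g̃_{w,d}(Y)`. -/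
def IsMinimizer (E : Finset (B × S)) (fj : S → Finset (B × S) → ℝ)
    (w : B × S → ℝ) (d : B → ℝ) (Z Y : Finset B) : Prop :=
  Z ⊆ Y ∧ fw E fj w (EX E Z) + ∑ k ∈ Y \ Z, d k = gTil E fj w d Y

/-- `Z` is an inclusion-minimal minimizer for `Y`. -/
def IsMinimalMinimizer (E : Finset (B × S)) (fj : S → Finset (B × S) → ℝ)
    (w : B × S → ℝ) (d : B → ℝ) (Z Y : Finset B) : Prop :=
  IsMinimizer E fj w d Z Y ∧
    ∀ Z' : Finset B, IsMinimizer E fj w d Z' Y → Z' ⊆ Z → Z' = Z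

/-- `X` is the unique minimal minimizer for `X` itself iff `X` is a
minimal minimizer for some `Y ⊇ X`; and in the former case `g̃_{w,d}(X) = f_w(E_X)`. -/
theorem minimal_minimizer_characterization
    (E : Finset (B × S)) (fj : S → Finset (B × S) → ℝ)
    (hfj : ∀ j : S, IsMonoSubmodular (Ej E j) (fj j))
    (w : B × S → ℝ) (hw : memP E fj w)
    (d : B → ℝ) (hd : ∀ i : B, 0 ≤ d i)
    (X : Finset B) :
    ((IsMinimalMinimizer E fj w d X X ∧
        ∀ Z : Finset B, IsMinimalMinimizer E fj w d Z X → Z = X) ↔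
      ∃ Y : Finset B, X ⊆ Y ∧ IsMinimalMinimizer E fj w d X Y) ∧
    (IsMinimalMinimizer E fj w d X X → gTil E fj w d X = fw E fj w (EX E X)) := by
  constructor
  · constructor
    · rintro ⟨h1, _⟩
      exact ⟨X, Finset.Subset.refl X, h1⟩
    · rintro ⟨Y, hXY, hminY, hminimalY⟩
      -- key sum identity : for Z' ⊆ X, Σ_{Y\Z'} d = Σ_{X\Z'} d + Σ_{Y\X} d
      have key : ∀ Z' : Finset B, Z' ⊆ X →
          (∑ k ∈ Y \ Z', d k) = (∑ k ∈ X \ Z', d k) + ∑ k ∈ Y \ X, d k := by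
        intro Z' hZ'
        have hsplit : Y \ Z' = (X \ Z') ∪ (Y \ X) := by
          ext a
          simp only [Finset.mem_sdiff, Finset.mem_union]
          constructor
          · rintro ⟨ha, hn⟩
            by_cases hx : a ∈ X
            · exact Or.inl ⟨hx, hn⟩
            · exact Or.inr ⟨ha, hx⟩
          · rintro (⟨hx, hn⟩ | ⟨hy, hnx⟩)
            · exact ⟨hXY hx, hn⟩
            · exact ⟨hy, fun h => hnx (hZ' h)⟩
        have hdisj : Disjoint (X \ Z') (Y \ X) :=
          Finset.disjoint_left.mpr (by
            intro a h1 h2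
            exact (Finset.mem_sdiff.mp h2).2 (Finset.mem_sdiff.mp h1).1)
        rw [hsplit, Finset.sum_union hdisj]
      -- every Z' ⊆ Y has objective value ≥ gTil Y
      have hlbY : ∀ Z' : Finset B, Z' ⊆ Y →
          gTil E fj w d Y ≤ fw E fj w (EX E Z') + ∑ k ∈ Y \ Z', d k := by
        intro Z' hZ'
        exact Finset.inf'_le _ (Finset.mem_powerset.mpr hZ')
      -- X is a minimizer for X
      have hXvalX : fw E fj w (EX E X) + ∑ k ∈ X \ X, d k = gTil E fj w d X := by
        apply le_antisymm
        · apply Finset.le_inf'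
          intro Z' hZ'
          have hZ'X : Z' ⊆ X := Finset.mem_powerset.mp hZ'
          have h1 : fw E fj w (EX E X) + ∑ k ∈ Y \ X, d k
              ≤ fw E fj w (EX E Z') + ∑ k ∈ Y \ Z', d k :=
            hminY.2 ▸ hlbY Z' (hZ'X.trans hXY)
          have h2 := key Z' hZ'X
          have h3 := key X (Finset.Subset.refl X)
          linarith
        · exact Finset.inf'_le _ (Finset.mem_powerset.mpr (Finset.Subset.refl X))
      -- every minimizer for X equals X
      have uniq : ∀ Z : Finset B, IsMinimizer E fj w d Z X → Z = X := by
        rintro Z ⟨hZX, hZval⟩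
        apply hminimalY Z _ hZX
        refine ⟨hZX.trans hXY, ?_⟩
        have h2 := key Z hZX
        have h3 := key X (Finset.Subset.refl X)
        have h4 := hminY.2
        have h5 : fw E fj w (EX E Z) + ∑ k ∈ X \ Z, d k
            = fw E fj w (EX E X) + ∑ k ∈ X \ X, d k := by rw [hZval, hXvalX]
        linarith
      exact ⟨⟨⟨Finset.Subset.refl X, hXvalX⟩, fun Z' hZ' _ => uniq Z' hZ'⟩,
        fun Z hZ => uniq Z hZ.1⟩
  · rintro ⟨⟨_, hval⟩, _⟩
    rw [Finset.sdiff_self, Finset.sum_empty, add_zero] at hval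
    exact hval.symm

end TwoSidedMarket
end
end

section
/- Let S be a finite set, t a positive integer with t ≤ |S|, and q : S → [0, 1] a function with Σ_{i∈S} q_i = t. Then there exists a probability distribution p over the t-element subsets of S (i.e., p(X) ≥ 0 for each t-element subset X ⊆ S and Σ_X p(X) = 1) such that for every i ∈ S, Σ_{X : i ∈ X} p(X) = q_i. -/
open Finset

private lemma aux_dist {S : Type*} [Fintype S] [DecidableEq S] (t : ℕ) :
    ∀ k : ℕ, ∀ q : S → ℝ, (∀ i, 0 ≤ q i) → (∀ i, q i ≤ 1) → (∑ i, q i = (t : ℝ)) →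
    ((univ.filter fun i => 0 < q i ∧ q i < 1).card ≤ k) →
    ∃ p : Finset S → ℝ,
      (∀ X : Finset S, 0 ≤ p X) ∧
      (∀ X : Finset S, X.card ≠ t → p X = 0) ∧
      (∑ X ∈ Finset.univ.filter (fun X : Finset S => X.card = t), p X) = 1 ∧
      ∀ i : S,
        (∑ X ∈ Finset.univ.filter (fun X : Finset S => X.card = t ∧ i ∈ X), p X) = q i := by
  intro k
  induction k with
  | zero =>
    intro q hq0 hq1 hsum hcard
    have hint : ∀ i, q i = 0 ∨ q i = 1 := by
      intro i
      by_contra h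
      push_neg at h
      have hmem : i ∈ univ.filter fun i => 0 < q i ∧ q i < 1 := by
        simp only [mem_filter, mem_univ, true_and]
        exact ⟨lt_of_le_of_ne (hq0 i) (Ne.symm h.1), lt_of_le_of_ne (hq1 i) h.2⟩
      have := Finset.card_pos.mpr ⟨i, hmem⟩
      omega
    set A : Finset S := univ.filter (fun i => q i = 1) with hA
    have hsumA : (A.card : ℝ) = t := by
      rw [← hsum]
      have hpt : ∀ i, q i = if q i = 1 then (1:ℝ) else 0 := by
        intro i; rcases hint i with h | h <;> simp [h]
      rw [Finset.sum_congr rfl fun i _ => hpt i, Finset.sum_boole]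
    have hAt : A.card = t := by exact_mod_cast hsumA
    refine ⟨fun X => if X = A then 1 else 0, ?_, ?_, ?_, ?_⟩
    · intro X; show 0 ≤ if X = A then (1:ℝ) else 0; split <;> norm_num
    · intro X hX; show (if X = A then (1:ℝ) else 0) = 0
      rw [if_neg]; rintro rfl; exact hX hAt
    · rw [Finset.sum_ite_eq' (univ.filter (fun X : Finset S => X.card = t)) A (fun _ => (1:ℝ))]
      rw [if_pos (by simp [hAt])]
    · intro l
      rw [Finset.sum_ite_eq' (univ.filter (fun X : Finset S => X.card = t ∧ l ∈ X)) A
        (fun _ => (1:ℝ))]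
      by_cases hl : l ∈ A
      · rw [if_pos (by simp [hAt, hl])]
        have : q l = 1 := by simpa [hA] using hl
        rw [this]
      · rw [if_neg (by simp [hAt, hl])]
        have : q l = 0 := by
          rcases hint l with h | h
          · exact h
          · exact absurd (by simp [hA, h]) hl
        rw [this]
  | succ k ih =>
    intro q hq0 hq1 hsum hcard
    by_cases hk : (univ.filter fun i => 0 < q i ∧ q i < 1).card ≤ k
    · exact ih q hq0 hq1 hsum hk
    push_neg at hk
    set F := univ.filter fun i => 0 < q i ∧ q i < 1 with hF
    obtain ⟨i, hi⟩ : F.Nonempty := Finset.card_pos.mp (by omega)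
    have hiq : 0 < q i ∧ q i < 1 := by simpa [hF] using hi
    obtain ⟨j, hj, hji⟩ : ∃ j ∈ F, j ≠ i := by
      by_contra h
      push_neg at h
      have hint : ∀ l, l ≠ i → q l = 0 ∨ q l = 1 := by
        intro l hl
        by_contra hc
        push_neg at hc
        have hmem : l ∈ F := by
          simp only [hF, mem_filter, mem_univ, true_and]
          exact ⟨lt_of_le_of_ne (hq0 l) (Ne.symm hc.1), lt_of_le_of_ne (hq1 l) hc.2⟩
        exact hl (h l hmem)
      set m := ((univ.erase i).filter (fun l => q l = 1)).card with hm
      have hsum2 : ∑ l ∈ univ.erase i, q l = (m : ℝ) := by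
        have hpt : ∀ l ∈ univ.erase i, q l = if q l = 1 then (1:ℝ) else 0 := by
          intro l hl
          rcases hint l (Finset.ne_of_mem_erase hl) with h' | h' <;> simp [h']
        rw [Finset.sum_congr rfl hpt, Finset.sum_boole]
      have hqi : q i = (t : ℝ) - m := by
        have h3 := Finset.add_sum_erase univ q (Finset.mem_univ i)
        rw [hsum2] at h3
        rw [← hsum, ← h3]; ring
      rw [hqi] at hiq
      have h1 : (m : ℝ) < t := by linarith [hiq.1]
      have h2 : (t : ℝ) < m + 1 := by
        have := hiq.2; push_cast; linarith
      have h1' : m < t := by exact_mod_cast h1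
      have h2' : (t : ℝ) < ((m + 1 : ℕ) : ℝ) := by push_cast; linarith
      have h2'' : t < m + 1 := by exact_mod_cast h2'
      omega
    have hjq : 0 < q j ∧ q j < 1 := by simpa [hF] using hj
    set a := min (1 - q i) (q j) with ha
    set b := min (q i) (1 - q j) with hb
    have ha0 : 0 < a := lt_min (by linarith [hiq.2]) hjq.1
    have hb0 : 0 < b := lt_min hiq.1 (by linarith [hjq.2])
    set q1 : S → ℝ := fun l => q l + (if l = i then a else 0) - (if l = j then a else 0)
      with hq1def
    set q2 : S → ℝ := fun l => q l - (if l = i then b else 0) + (if l = j then b else 0)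
      with hq2def
    have hij : i ≠ j := hji.symm
    have hq1i : q1 i = q i + a := by simp [hq1def, hij]
    have hq1j : q1 j = q j - a := by simp [hq1def, hji]
    have hq1o : ∀ l, l ≠ i → l ≠ j → q1 l = q l := by intro l h1 h2; simp [hq1def, h1, h2]
    have hq2i : q2 i = q i - b := by simp [hq2def, hij]
    have hq2j : q2 j = q j + b := by simp [hq2def, hji]
    have hq2o : ∀ l, l ≠ i → l ≠ j → q2 l = q l := by intro l h1 h2; simp [hq2def, h1, h2]
    have haub : a ≤ 1 - q i := min_le_left _ _
    have haub2 : a ≤ q j := min_le_right _ _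
    have hbub : b ≤ q i := min_le_left _ _
    have hbub2 : b ≤ 1 - q j := min_le_right _ _
    have hq10 : ∀ x, 0 ≤ q1 x := by
      intro x
      rcases eq_or_ne x i with h1 | h1
      · rw [h1, hq1i]; linarith [hq0 i]
      rcases eq_or_ne x j with h2 | h2
      · rw [h2, hq1j]; linarith
      · rw [hq1o x h1 h2]; exact hq0 x
    have hq11 : ∀ x, q1 x ≤ 1 := by
      intro x
      rcases eq_or_ne x i with h1 | h1
      · rw [h1, hq1i]; linarith
      rcases eq_or_ne x j with h2 | h2
      · rw [h2, hq1j]; linarith [hq1 j]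
      · rw [hq1o x h1 h2]; exact hq1 x
    have hq20 : ∀ x, 0 ≤ q2 x := by
      intro x
      rcases eq_or_ne x i with h1 | h1
      · rw [h1, hq2i]; linarith
      rcases eq_or_ne x j with h2 | h2
      · rw [h2, hq2j]; linarith [hq0 j]
      · rw [hq2o x h1 h2]; exact hq0 x
    have hq21 : ∀ x, q2 x ≤ 1 := by
      intro x
      rcases eq_or_ne x i with h1 | h1
      · rw [h1, hq2i]; linarith [hq1 i]
      rcases eq_or_ne x j with h2 | h2
      · rw [h2, hq2j]; linarith
      · rw [hq2o x h1 h2]; exact hq1 x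
    have hsum1 : ∑ l, q1 l = (t : ℝ) := by
      simp only [hq1def]
      rw [Finset.sum_sub_distrib, Finset.sum_add_distrib]
      rw [Finset.sum_ite_eq' univ i (fun _ => a), Finset.sum_ite_eq' univ j (fun _ => a)]
      simp [hsum]
    have hsum2 : ∑ l, q2 l = (t : ℝ) := by
      simp only [hq2def]
      rw [Finset.sum_add_distrib, Finset.sum_sub_distrib]
      rw [Finset.sum_ite_eq' univ i (fun _ => b), Finset.sum_ite_eq' univ j (fun _ => b)]
      simp [hsum]
    have hsub1 : (univ.filter fun l => 0 < q1 l ∧ q1 l < 1) ⊂ F := by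
      constructor
      · intro x hx
        simp only [mem_filter, mem_univ, true_and] at hx
        rcases eq_or_ne x i with h1 | h1
        · rw [h1]; exact hi
        rcases eq_or_ne x j with h2 | h2
        · rw [h2]; exact hj
        · rw [hq1o x h1 h2] at hx
          simpa [hF] using hx
      · rcases le_total (1 - q i) (q j) with h | h
        · intro hsub
          have hmem : i ∈ univ.filter fun l => 0 < q1 l ∧ q1 l < 1 := hsub hi
          simp only [mem_filter, mem_univ, true_and] at hmem
          rw [hq1i, ha, min_eq_left h] at hmem
          linarith [hmem.2]
        · intro hsub
          have hmem : j ∈ univ.filter fun l => 0 < q1 l ∧ q1 l < 1 := hsub hj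
          simp only [mem_filter, mem_univ, true_and] at hmem
          rw [hq1j, ha, min_eq_right h] at hmem
          linarith [hmem.1]
    have hsub2 : (univ.filter fun l => 0 < q2 l ∧ q2 l < 1) ⊂ F := by
      constructor
      · intro x hx
        simp only [mem_filter, mem_univ, true_and] at hx
        rcases eq_or_ne x i with h1 | h1
        · rw [h1]; exact hi
        rcases eq_or_ne x j with h2 | h2
        · rw [h2]; exact hj
        · rw [hq2o x h1 h2] at hx
          simpa [hF] using hx
      · rcases le_total (q i) (1 - q j) with h | h
        · intro hsub
          have hmem : i ∈ univ.filter fun l => 0 < q2 l ∧ q2 l < 1 := hsub hi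
          simp only [mem_filter, mem_univ, true_and] at hmem
          rw [hq2i, hb, min_eq_left h] at hmem
          linarith [hmem.1]
        · intro hsub
          have hmem : j ∈ univ.filter fun l => 0 < q2 l ∧ q2 l < 1 := hsub hj
          simp only [mem_filter, mem_univ, true_and] at hmem
          rw [hq2j, hb, min_eq_right h] at hmem
          linarith [hmem.2]
    have hc1 : (univ.filter fun l => 0 < q1 l ∧ q1 l < 1).card ≤ k := by
      have := Finset.card_lt_card hsub1; omega
    have hc2 : (univ.filter fun l => 0 < q2 l ∧ q2 l < 1).card ≤ k := by
      have := Finset.card_lt_card hsub2; omega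
    obtain ⟨p1, hp10, hp1z, hp1s, hp1m⟩ := ih q1 hq10 hq11 hsum1 hc1
    obtain ⟨p2, hp20, hp2z, hp2s, hp2m⟩ := ih q2 hq20 hq21 hsum2 hc2
    have hab : 0 < a + b := by linarith
    refine ⟨fun X => (b / (a + b)) * p1 X + (a / (a + b)) * p2 X, ?_, ?_, ?_, ?_⟩
    · intro X
      show 0 ≤ (b / (a + b)) * p1 X + (a / (a + b)) * p2 X
      have h1 := hp10 X; have h2 := hp20 X
      positivity
    · intro X hX
      show (b / (a + b)) * p1 X + (a / (a + b)) * p2 X = 0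
      rw [hp1z X hX, hp2z X hX]; ring
    · rw [Finset.sum_add_distrib, ← Finset.mul_sum, ← Finset.mul_sum, hp1s, hp2s]
      field_simp
      ring
    · intro x
      rw [Finset.sum_add_distrib, ← Finset.mul_sum, ← Finset.mul_sum, hp1m, hp2m]
      rcases eq_or_ne x i with h1 | h1
      · rw [h1, hq1i, hq2i]; field_simp; ring
      rcases eq_or_ne x j with h2 | h2
      · rw [h2, hq1j, hq2j]; field_simp; ring
      · rw [hq1o x h1 h2, hq2o x h1 h2]
        field_simp
        ring

/-- if `q : S → [0,1]` sums to `t`, there is a probability distribution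
`p` on the `t`-element subsets of `S` with `Σ_{X : i ∈ X} p(X) = q_i` for every `i`. -/
theorem exists_distribution_on_subsets {S : Type*} [Fintype S] [DecidableEq S]
    (t : ℕ) (ht : 0 < t) (htn : t ≤ Fintype.card S)
    (q : S → ℝ) (hq0 : ∀ i, 0 ≤ q i) (hq1 : ∀ i, q i ≤ 1)
    (hsum : ∑ i, q i = (t : ℝ)) :
    ∃ p : Finset S → ℝ,
      (∀ X : Finset S, 0 ≤ p X) ∧
      (∀ X : Finset S, X.card ≠ t → p X = 0) ∧
      (∑ X ∈ Finset.univ.filter (fun X : Finset S => X.card = t), p X) = 1 ∧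
      ∀ i : S,
        (∑ X ∈ Finset.univ.filter (fun X : Finset S => X.card = t ∧ i ∈ X), p X) = q i := by
  exact aux_dist t _ q hq0 hq1 hsum le_rfl
end

section
/- Let S be a finite set with |S| = n and let β_1 ≥ β_2 ≥ ⋯ ≥ β_n ≥ 0 be real numbers, and let Q := {x ∈ ℝ_{≥0}^S : Σ_{i∈A} x_i ≤ Σ_{l=1}^{|A|} β_l for all A ⊆ S}. Then the extreme points of Q are exactly the vectors ξ ∈ ℝ_{≥0}^S such that, for some subset S' ⊆ S and some bijection ψ : S' → {1, 2, …, |S'|}, one has ξ_i = β_{ψ(i)} for i ∈ S' and ξ_i = 0 for i ∉ S'. -/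
open Finset

lemma fin_le_orderEmb {k : ℕ} (e : Fin k ↪o ℕ) (j : Fin k) : (j : ℕ) ≤ e j := by
  obtain ⟨m, hm⟩ := j
  induction m with
  | zero => exact Nat.zero_le _
  | succ m ih =>
      have hmk : m < k := Nat.lt_of_succ_lt hm
      have h := e.strictMono (show (⟨m, hmk⟩ : Fin k) < ⟨m + 1, hm⟩ by
        exact Fin.mk_lt_mk.2 (Nat.lt_succ_self m))
      have h2 := ih hmk
      simp only [Fin.val_mk] at h2 ⊢
      omega

lemma sum_le_sum_range_card {n : ℕ} {β : ℕ → ℝ}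
    (hmono : ∀ k l : ℕ, k ≤ l → l < n → β l ≤ β k)
    {T : Finset ℕ} (hT : ∀ l ∈ T, l < n) :
    ∑ l ∈ T, β l ≤ ∑ l ∈ Finset.range T.card, β l := by
  have hcard : T.card = T.card := rfl
  set e := T.orderEmbOfFin hcard with he
  have hmap : Finset.univ.map e.toEmbedding = T := by
    apply Finset.coe_injective
    rw [Finset.coe_map, Finset.coe_univ, Set.image_univ]
    exact T.range_orderEmbOfFin hcard
  calc ∑ l ∈ T, β l = ∑ l ∈ Finset.univ.map e.toEmbedding, β l := by rw [hmap]
    _ = ∑ j : Fin T.card, β (e j) := Finset.sum_map _ _ _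
    _ ≤ ∑ j : Fin T.card, β (j : ℕ) := by
        refine Finset.sum_le_sum fun j _ => ?_
        exact hmono j (e j) (fin_le_orderEmb e j) (hT _ (T.orderEmbOfFin_mem hcard j))
    _ = ∑ l ∈ Finset.range T.card, β l := Fin.sum_univ_eq_sum_range _ _

lemma prefix_sum_mono {n : ℕ} {β : ℕ → ℝ}
    (hpos : ∀ l : ℕ, l < n → 0 ≤ β l) {a b : ℕ} (hab : a ≤ b) (hb : b ≤ n) :
    ∑ l ∈ Finset.range a, β l ≤ ∑ l ∈ Finset.range b, β l := by
  refine Finset.sum_le_sum_of_subset_of_nonneg (Finset.range_subset_range.2 hab) ?_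
  intro l hl _
  exact hpos l (lt_of_lt_of_le (Finset.mem_range.1 hl) hb)

lemma prefix_sum_submod {n : ℕ} {β : ℕ → ℝ}
    (hmono : ∀ k l : ℕ, k ≤ l → l < n → β l ≤ β k)
    {a b u v : ℕ} (hu : u ≤ n) (hsum : u + v = a + b)
    (hva : v ≤ a) (hau : a ≤ u) (hvb : v ≤ b) :
    ∑ l ∈ Finset.range u, β l + ∑ l ∈ Finset.range v, β l ≤
      ∑ l ∈ Finset.range a, β l + ∑ l ∈ Finset.range b, β l := by
  have h1 : ∑ l ∈ Finset.range u, β l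
      = ∑ l ∈ Finset.range a, β l + ∑ l ∈ Finset.Ico a u, β l := by
    rw [← Finset.sum_range_add_sum_Ico _ hau]
  have h2 : ∑ l ∈ Finset.range b, β l
      = ∑ l ∈ Finset.range v, β l + ∑ l ∈ Finset.Ico v b, β l := by
    rw [← Finset.sum_range_add_sum_Ico _ hvb]
  have h3 : ∑ l ∈ Finset.Ico a u, β l ≤ ∑ l ∈ Finset.Ico v b, β l := by
    rw [Finset.sum_Ico_eq_sum_range, Finset.sum_Ico_eq_sum_range]
    have hlen : u - a = b - v := by omega
    rw [hlen]
    refine Finset.sum_le_sum fun j hj => ?_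
    have hj' : j < b - v := Finset.mem_range.1 hj
    exact hmono (v + j) (a + j) (by omega) (by omega)
  linarith


/-- the extreme points of the polymatroid
`Q = {x ≥ 0 : Σ_{i ∈ A} x_i ≤ Σ_{l < |A|} β_l for all A ⊆ S}` are exactly the
vectors obtained by injectively assigning the top `|S'|` values `β_0, …, β_{|S'|-1}`
to the coordinates of some subset `S' ⊆ S` and `0` elsewhere. -/
theorem extreme_points_of_quality_polymatroid {S : Type*} [Fintype S] [DecidableEq S]
    (n : ℕ) (hn : Fintype.card S = n)
    (β : ℕ → ℝ) (hmono : ∀ k l : ℕ, k ≤ l → l < n → β l ≤ β k)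
    (hpos : ∀ l : ℕ, l < n → 0 ≤ β l) :
    Set.extremePoints ℝ
      {x : S → ℝ | (∀ i, 0 ≤ x i) ∧
        ∀ A : Finset S, ∑ i ∈ A, x i ≤ ∑ l ∈ Finset.range A.card, β l} =
    {ξ : S → ℝ | ∃ (S' : Finset S) (ψ : S → ℕ),
      Set.BijOn ψ (↑S' : Set S) (↑(Finset.range S'.card) : Set ℕ) ∧
      (∀ i ∈ S', ξ i = β (ψ i)) ∧ ∀ i ∉ S', ξ i = 0} := by
  classical
  have hcardn : ∀ A : Finset S, A.card ≤ n := fun A => hn ▸ A.card_le_univ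
  ext ξ
  simp only [Set.mem_setOf_eq]
  rw [mem_extremePoints]
  constructor
  · rintro ⟨⟨hnn, hfeas⟩, hext⟩
    -- HARD DIRECTION
    set supp := Finset.univ.filter (fun i => ξ i ≠ 0) with hsupp
    -- perturbation principle
    have hperturb : ∀ d : S → ℝ, ∀ ε : ℝ, 0 < ε →
        (∀ i, 0 ≤ ξ i + ε * d i) →
        (∀ A : Finset S, ∑ i ∈ A, (ξ i + ε * d i) ≤ ∑ l ∈ Finset.range A.card, β l) →
        (∀ i, 0 ≤ ξ i - ε * d i) →
        (∀ A : Finset S, ∑ i ∈ A, (ξ i - ε * d i) ≤ ∑ l ∈ Finset.range A.card, β l) →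
        d = 0 := by
      intro d ε hε h1n h1f h2n h2f
      have hseg : ξ ∈ openSegment ℝ (fun i => ξ i + ε * d i) (fun i => ξ i - ε * d i) := by
        refine ⟨1/2, 1/2, by norm_num, by norm_num, by norm_num, ?_⟩
        funext i
        simp only [Pi.add_apply, Pi.smul_apply, smul_eq_mul]
        ring
      have h := hext (fun i => ξ i + ε * d i) ⟨h1n, h1f⟩ (fun i => ξ i - ε * d i) ⟨h2n, h2f⟩ hseg
      funext i
      have h1 := congrFun h.1 i
      have h2 : ε * d i = 0 := by linarith
      have h3 := (mul_eq_zero.1 h2).resolve_left hε.ne'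
      simpa using h3
    -- every support element lies in a tight set
    have htightmem : ∀ i ∈ supp, ∃ A : Finset S, i ∈ A ∧
        ∑ j ∈ A, ξ j = ∑ l ∈ Finset.range A.card, β l := by
      intro i hi
      have hξi : 0 < ξ i := by
        have h' : ξ i ≠ 0 := (Finset.mem_filter.1 hi).2
        exact lt_of_le_of_ne (hnn i) (Ne.symm h')
      by_contra hcon
      push_neg at hcon
      have hslack : ∀ A : Finset S, i ∈ A →
          ∑ j ∈ A, ξ j < ∑ l ∈ Finset.range A.card, β l := by
        intro A hiA
        exact lt_of_le_of_ne (hfeas A) (hcon A hiA)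
      set g : Finset S → ℝ :=
        fun A => if i ∈ A then (∑ l ∈ Finset.range A.card, β l) - ∑ j ∈ A, ξ j else 1 with hg
      have hgpos : ∀ A, 0 < g A := by
        intro A
        by_cases h : i ∈ A
        · simp only [hg, if_pos h]; linarith [hslack A h]
        · simp only [hg, if_neg h]; norm_num
      set ε := min (ξ i) ((Finset.univ : Finset (Finset S)).inf' ⟨∅, Finset.mem_univ ∅⟩ g)
        with hεdef
      have hε : 0 < ε := lt_min hξi ((Finset.lt_inf'_iff _).2 fun A _ => hgpos A)
      have hεξ : ε ≤ ξ i := min_le_left _ _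
      have hεle : ∀ A : Finset S, i ∈ A →
          ε ≤ (∑ l ∈ Finset.range A.card, β l) - ∑ j ∈ A, ξ j := by
        intro A hiA
        have h1 : ε ≤ g A :=
          le_trans (min_le_right _ _) (Finset.inf'_le g (Finset.mem_univ A))
        simp only [hg] at h1
        rwa [if_pos hiA] at h1
      set d : S → ℝ := fun j => if j = i then 1 else 0 with hd
      have hsumd : ∀ A : Finset S, ∑ j ∈ A, d j = if i ∈ A then (1:ℝ) else 0 := by
        intro A
        simp only [hd]
        rw [Finset.sum_ite_eq' A i (fun _ => (1:ℝ))]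
      have h0 := hperturb d ε hε ?_ ?_ ?_ ?_
      · have := congrFun h0 i
        simp [hd] at this
      · intro j
        by_cases hj : j = i
        · subst hj; simp only [hd, if_pos rfl]; linarith [hnn j]
        · simp only [hd, if_neg hj, mul_zero, add_zero]; exact hnn j
      · intro A
        rw [Finset.sum_add_distrib, ← Finset.mul_sum, hsumd]
        by_cases hiA : i ∈ A
        · rw [if_pos hiA, mul_one]; linarith [hεle A hiA]
        · rw [if_neg hiA, mul_zero, add_zero]; exact hfeas A
      · intro j
        by_cases hj : j = i
        · subst hj; simp only [hd, if_pos rfl, mul_one]; linarith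
        · simp only [hd, if_neg hj, mul_zero, sub_zero]; exact hnn j
      · intro A
        rw [Finset.sum_sub_distrib, ← Finset.mul_sum, hsumd]
        by_cases hiA : i ∈ A
        · rw [if_pos hiA, mul_one]; linarith [hfeas A]
        · rw [if_neg hiA, mul_zero, sub_zero]; exact hfeas A
    -- tight sets are closed under union and intersection
    have hlattice : ∀ A B : Finset S,
        (∑ i ∈ A, ξ i = ∑ l ∈ Finset.range A.card, β l) →
        (∑ i ∈ B, ξ i = ∑ l ∈ Finset.range B.card, β l) →
        (∑ i ∈ A ∪ B, ξ i = ∑ l ∈ Finset.range (A ∪ B).card, β l) ∧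
        (∑ i ∈ A ∩ B, ξ i = ∑ l ∈ Finset.range (A ∩ B).card, β l) := by
      intro A B hA hB
      have hsum : ∑ i ∈ A ∪ B, ξ i + ∑ i ∈ A ∩ B, ξ i = ∑ i ∈ A, ξ i + ∑ i ∈ B, ξ i :=
        Finset.sum_union_inter
      have hcard := Finset.card_union_add_card_inter A B
      have hsub := prefix_sum_submod hmono (hcardn (A ∪ B)) hcard
        (Finset.card_le_card Finset.inter_subset_left)
        (Finset.card_le_card Finset.subset_union_left)
        (Finset.card_le_card Finset.inter_subset_right)
      have h1 := hfeas (A ∪ B)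
      have h2 := hfeas (A ∩ B)
      constructor <;> linarith
    -- intersecting a tight set with the support keeps it tight
    have hrestrict : ∀ A : Finset S,
        (∑ i ∈ A, ξ i = ∑ l ∈ Finset.range A.card, β l) →
        ∑ i ∈ A ∩ supp, ξ i = ∑ l ∈ Finset.range (A ∩ supp).card, β l := by
      intro A hA
      have heq : ∑ i ∈ A ∩ supp, ξ i = ∑ i ∈ A, ξ i := by
        refine Finset.sum_subset Finset.inter_subset_left ?_
        intro i hi hni
        by_contra hne
        exact hni (Finset.mem_inter.2 ⟨hi, Finset.mem_filter.2 ⟨Finset.mem_univ i, hne⟩⟩)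
      have h2 := hfeas (A ∩ supp)
      have h3 : ∑ l ∈ Finset.range (A ∩ supp).card, β l ≤ ∑ l ∈ Finset.range A.card, β l :=
        prefix_sum_mono hpos
          (Finset.card_le_card (Finset.inter_subset_left : A ∩ supp ⊆ A)) (hcardn A)
      linarith
    -- the support is tight
    have hUnion : ∀ F : Finset S, F ⊆ supp → ∃ U : Finset S,
        (∑ i ∈ U, ξ i = ∑ l ∈ Finset.range U.card, β l) ∧ F ⊆ U := by
      intro F
      induction F using Finset.induction_on with
      | empty => exact fun _ => ⟨∅, by simp, Finset.empty_subset _⟩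
      | insert _ _ hnm ih =>
        rename_i i F
        intro hsub
        obtain ⟨U, hU, hFU⟩ := ih ((Finset.insert_subset_iff.1 hsub).2)
        obtain ⟨T, hiT, hT⟩ := htightmem i (Finset.insert_subset_iff.1 hsub).1
        refine ⟨U ∪ T, (hlattice U T hU hT).1, ?_⟩
        intro j hj
        rcases Finset.mem_insert.1 hj with rfl | hj
        · exact Finset.mem_union_right _ hiT
        · exact Finset.mem_union_left _ (hFU hj)
    have hsupptight : ∑ i ∈ supp, ξ i = ∑ l ∈ Finset.range supp.card, β l := by
      obtain ⟨U, hU, hsuppU⟩ := hUnion supp (Finset.Subset.refl _)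
      have h := hrestrict U hU
      rwa [Finset.inter_eq_right.2 hsuppU] at h
    -- tight sets separate distinct support elements
    have hsep : ∀ i ∈ supp, ∀ j ∈ supp, i ≠ j → ∃ D : Finset S,
        (∑ t ∈ D, ξ t = ∑ l ∈ Finset.range D.card, β l) ∧
        ((i ∈ D ∧ j ∉ D) ∨ (j ∈ D ∧ i ∉ D)) := by
      intro i hi j hj hij
      have hξi : 0 < ξ i :=
        lt_of_le_of_ne (hnn i) (Ne.symm (Finset.mem_filter.1 hi).2)
      have hξj : 0 < ξ j :=
        lt_of_le_of_ne (hnn j) (Ne.symm (Finset.mem_filter.1 hj).2)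
      by_contra hcon
      push_neg at hcon
      have hslack : ∀ A : Finset S, ((i ∈ A ∧ j ∉ A) ∨ (j ∈ A ∧ i ∉ A)) →
          ∑ t ∈ A, ξ t < ∑ l ∈ Finset.range A.card, β l := by
        intro A hA'
        refine lt_of_le_of_ne (hfeas A) fun heq => ?_
        have h := hcon A heq
        tauto
      set g : Finset S → ℝ :=
        fun A => if (i ∈ A ∧ j ∉ A) ∨ (j ∈ A ∧ i ∉ A) then
          (∑ l ∈ Finset.range A.card, β l) - ∑ t ∈ A, ξ t else 1 with hg
      have hgpos : ∀ A, 0 < g A := by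
        intro A
        by_cases h : (i ∈ A ∧ j ∉ A) ∨ (j ∈ A ∧ i ∉ A)
        · simp only [hg, if_pos h]; linarith [hslack A h]
        · simp only [hg, if_neg h]; norm_num
      set ε := min (min (ξ i) (ξ j))
        ((Finset.univ : Finset (Finset S)).inf' ⟨∅, Finset.mem_univ ∅⟩ g) with hεdef
      have hε : 0 < ε :=
        lt_min (lt_min hξi hξj) ((Finset.lt_inf'_iff _).2 fun A _ => hgpos A)
      have hεξi : ε ≤ ξ i := le_trans (min_le_left _ _) (min_le_left _ _)
      have hεξj : ε ≤ ξ j := le_trans (min_le_left _ _) (min_le_right _ _)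
      have hεle : ∀ A : Finset S, ((i ∈ A ∧ j ∉ A) ∨ (j ∈ A ∧ i ∉ A)) →
          ε ≤ (∑ l ∈ Finset.range A.card, β l) - ∑ t ∈ A, ξ t := by
        intro A hA'
        have h1 : ε ≤ g A :=
          le_trans (min_le_right _ _) (Finset.inf'_le g (Finset.mem_univ A))
        simp only [hg] at h1
        rwa [if_pos hA'] at h1
      set d : S → ℝ := fun t => if t = i then 1 else if t = j then -1 else 0 with hd
      have hsumd : ∀ A : Finset S,
          ∑ t ∈ A, d t = (if i ∈ A then (1:ℝ) else 0) - (if j ∈ A then (1:ℝ) else 0) := by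
        intro A
        have hdt : ∀ t ∈ A, d t
            = (if t = i then (1:ℝ) else 0) + (if t = j then (-1:ℝ) else 0) := by
          intro t _
          by_cases h1 : t = i
          · subst h1
            simp only [hd, if_pos rfl, if_neg hij]
            norm_num
          · by_cases h2 : t = j
            · subst h2
              simp only [hd, if_neg h1, if_pos rfl]
              norm_num
            · simp only [hd, if_neg h1, if_neg h2]
              norm_num
        rw [Finset.sum_congr rfl hdt, Finset.sum_add_distrib,
          Finset.sum_ite_eq' A i (fun _ => (1:ℝ)), Finset.sum_ite_eq' A j (fun _ => (-1:ℝ))]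
        by_cases hiA : i ∈ A <;> by_cases hjA : j ∈ A <;> simp [hiA, hjA]
      have h0 := hperturb d ε hε ?_ ?_ ?_ ?_
      · have := congrFun h0 i
        simp [hd] at this
      · intro t
        by_cases h1 : t = i
        · subst h1; simp only [hd, if_pos rfl, mul_one]; linarith
        · by_cases h2 : t = j
          · subst h2
            have hdt : d t = -1 := by simp [hd, h1]
            rw [hdt]; linarith
          · simp only [hd, if_neg h1, if_neg h2, mul_zero, add_zero]; exact hnn t
      · intro A
        rw [Finset.sum_add_distrib, ← Finset.mul_sum, hsumd]
        by_cases hiA : i ∈ A <;> by_cases hjA : j ∈ A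
        · simp only [if_pos hiA, if_pos hjA]
          have := hfeas A; linarith
        · simp only [if_pos hiA, if_neg hjA]
          have := hεle A (Or.inl ⟨hiA, hjA⟩); linarith
        · simp only [if_neg hiA, if_pos hjA]
          have := hfeas A; linarith
        · simp only [if_neg hiA, if_neg hjA]
          have := hfeas A; linarith
      · intro t
        by_cases h1 : t = i
        · subst h1; simp only [hd, if_pos rfl, mul_one]; linarith
        · by_cases h2 : t = j
          · subst h2
            have hdt : d t = -1 := by simp [hd, h1]
            rw [hdt]; linarith
          · simp only [hd, if_neg h1, if_neg h2, mul_zero, sub_zero]; exact hnn t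
      · intro A
        rw [Finset.sum_sub_distrib, ← Finset.mul_sum, hsumd]
        by_cases hiA : i ∈ A <;> by_cases hjA : j ∈ A
        · simp only [if_pos hiA, if_pos hjA]
          have := hfeas A; linarith
        · simp only [if_pos hiA, if_neg hjA]
          have := hfeas A; linarith
        · simp only [if_neg hiA, if_pos hjA]
          have := hεle A (Or.inr ⟨hjA, hiA⟩); linarith
        · simp only [if_neg hiA, if_neg hjA]
          have := hfeas A; linarith
    -- main chain construction
    have hchain : ∀ m : ℕ, ∀ C : Finset S, C ⊆ supp →
        (∑ i ∈ C, ξ i = ∑ l ∈ Finset.range C.card, β l) → C.card = m →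
        ∃ ψ : S → ℕ, Set.BijOn ψ (↑C : Set S) (↑(Finset.range m) : Set ℕ) ∧
          ∀ i ∈ C, ξ i = β (ψ i) := by
      intro m
      induction m using Nat.strong_induction_on with
      | _ m ih =>
        intro C hCsupp hCtight hCcard
        rcases Nat.eq_zero_or_pos m with rfl | hm
        · have hC : C = ∅ := Finset.card_eq_zero.1 hCcard
          subst hC
          refine ⟨fun _ => 0, ?_, by simp⟩
          simp only [Finset.coe_empty, Finset.range_zero]
          exact Set.bijOn_empty _
        · have hCne : C.Nonempty := Finset.card_pos.1 (hCcard ▸ hm)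
          set 𝒮 := C.powerset.filter
            (fun M => (∑ i ∈ M, ξ i = ∑ l ∈ Finset.range M.card, β l) ∧ M ≠ C) with h𝒮
          have hemp : ∅ ∈ 𝒮 := by
            refine Finset.mem_filter.2 ⟨Finset.empty_mem_powerset C, by simp, ?_⟩
            exact fun h => hCne.ne_empty h.symm
          obtain ⟨M, hM𝒮, hMmax⟩ := Finset.exists_max_image 𝒮 Finset.card ⟨∅, hemp⟩
          obtain ⟨hMC', hMtight, hMne⟩ := Finset.mem_filter.1 hM𝒮
          have hMC : M ⊆ C := Finset.mem_powerset.1 hMC'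
          have hone : (C \ M).card = 1 := by
            have hpos' : 0 < (C \ M).card := by
              refine Finset.card_pos.2 (Finset.sdiff_nonempty.2 ?_)
              exact fun h => hMne (Finset.Subset.antisymm hMC h)
            by_contra hne
            have h2 : 1 < (C \ M).card := by omega
            obtain ⟨i, hi, j, hj, hij⟩ := Finset.one_lt_card.1 h2
            have hiC := (Finset.mem_sdiff.1 hi).1
            have hiM := (Finset.mem_sdiff.1 hi).2
            have hjC := (Finset.mem_sdiff.1 hj).1
            have hjM := (Finset.mem_sdiff.1 hj).2
            have hcontr : ∀ (i' j' : S), i' ∈ C → i' ∉ M → j' ∈ C → j' ∉ M →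
                ∀ D : Finset S, (∑ t ∈ D, ξ t = ∑ l ∈ Finset.range D.card, β l) →
                i' ∈ D → j' ∉ D → False := by
              intro i' j' hi'C hi'M hj'C hj'D D hD hiD hjD
              set E := (M ∪ D) ∩ C with hE
              have hEtight :=
                (hlattice (M ∪ D) C (hlattice M D hMtight hD).1 hCtight).2
              have hME : M ⊆ E :=
                Finset.subset_inter Finset.subset_union_left hMC
              have hiE : i' ∈ E :=
                Finset.mem_inter.2 ⟨Finset.mem_union_right _ hiD, hi'C⟩
              have hjE : j' ∉ E := by
                intro h
                rcases Finset.mem_union.1 (Finset.mem_inter.1 h).1 with h' | h'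
                · exact hj'D h'
                · exact hjD h'
              have hEC : E ≠ C := fun h => hjE (h ▸ hj'C)
              have hE𝒮 : E ∈ 𝒮 := Finset.mem_filter.2
                ⟨Finset.mem_powerset.2 Finset.inter_subset_right, hEtight, hEC⟩
              have hle := hMmax E hE𝒮
              have hlt : M ⊂ E := Finset.ssubset_iff_of_subset hME |>.2 ⟨i', hiE, hi'M⟩
              have := Finset.card_lt_card hlt
              omega
            obtain ⟨D, hDtight, hDcase⟩ := hsep i (hCsupp hiC) j (hCsupp hjC) hij
            rcases hDcase with ⟨h1, h2⟩ | ⟨h1, h2⟩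
            · exact hcontr i j hiC hiM hjC hjM D hDtight h1 h2
            · exact hcontr j i hjC hjM hiC hiM D hDtight h1 h2
          obtain ⟨i₀, hi₀⟩ := Finset.card_eq_one.1 hone
          have hi₀mem : i₀ ∈ C \ M := hi₀ ▸ Finset.mem_singleton_self i₀
          have hi₀C : i₀ ∈ C := (Finset.mem_sdiff.1 hi₀mem).1
          have hi₀M : i₀ ∉ M := (Finset.mem_sdiff.1 hi₀mem).2
          have hCins : C = insert i₀ M := by
            ext t
            simp only [Finset.mem_insert]
            constructor
            · intro htC
              by_cases htM : t ∈ M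
              · exact Or.inr htM
              · left
                have : t ∈ C \ M := Finset.mem_sdiff.2 ⟨htC, htM⟩
                rw [hi₀] at this
                exact Finset.mem_singleton.1 this
            · rintro (rfl | htM)
              · exact hi₀C
              · exact hMC htM
          have hMcard : M.card = m - 1 := by
            have h1 : C.card = M.card + 1 := by
              rw [hCins, Finset.card_insert_of_notMem hi₀M]
            omega
          obtain ⟨ψ₀, hψ₀bij, hψ₀val⟩ :=
            ih (m - 1) (by omega) M (hMC.trans hCsupp) hMtight hMcard
          have hψ₀lt : ∀ t ∈ M, ψ₀ t < m - 1 := by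
            intro t ht
            have := hψ₀bij.mapsTo (Finset.mem_coe.2 ht)
            simpa using this
          have hξi₀ : ξ i₀ = β (m - 1) := by
            have h1 : ∑ i ∈ C, ξ i = ξ i₀ + ∑ i ∈ M, ξ i := by
              rw [hCins, Finset.sum_insert hi₀M]
            have h2 : ∑ l ∈ Finset.range m, β l
                = ∑ l ∈ Finset.range (m - 1), β l + β (m - 1) := by
              have hm' : m = (m - 1) + 1 := by omega
              rw [hm', Finset.sum_range_succ]
              simp
            rw [hCcard] at hCtight
            rw [hMcard] at hMtight
            linarith
          set ψ : S → ℕ := fun t => if t = i₀ then m - 1 else ψ₀ t with hψ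
          refine ⟨ψ, ⟨?_, ?_, ?_⟩, ?_⟩
          · -- MapsTo
            intro t ht
            simp only [Finset.coe_range, Set.mem_Iio]
            have htC : t ∈ C := Finset.mem_coe.1 ht
            by_cases h1 : t = i₀
            · simp only [hψ, if_pos h1]; omega
            · have htM : t ∈ M := by
                rw [hCins] at htC
                rcases Finset.mem_insert.1 htC with h | h
                · exact absurd h h1
                · exact h
              simp only [hψ, if_neg h1]
              have := hψ₀lt t htM
              omega
          · -- InjOn
            intro t ht u hu htu
            have htC : t ∈ C := Finset.mem_coe.1 ht
            have huC : u ∈ C := Finset.mem_coe.1 hu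
            have hmem : ∀ v, v ∈ C → v ≠ i₀ → v ∈ M := by
              intro v hv hvne
              rw [hCins] at hv
              rcases Finset.mem_insert.1 hv with h | h
              · exact absurd h hvne
              · exact h
            by_cases h1 : t = i₀ <;> by_cases h2 : u = i₀
            · rw [h1, h2]
            · exfalso
              have huM := hmem u huC h2
              rw [hψ] at htu
              simp only [if_pos h1, if_neg h2] at htu
              have := hψ₀lt u huM
              omega
            · exfalso
              have htM := hmem t htC h1
              rw [hψ] at htu
              simp only [if_neg h1, if_pos h2] at htu
              have := hψ₀lt t htM
              omega
            · have htM := hmem t htC h1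
              have huM := hmem u huC h2
              rw [hψ] at htu
              simp only [if_neg h1, if_neg h2] at htu
              exact hψ₀bij.injOn (Finset.mem_coe.2 htM) (Finset.mem_coe.2 huM) htu
          · -- SurjOn
            intro l hl
            simp only [Finset.coe_range, Set.mem_Iio] at hl
            by_cases h1 : l = m - 1
            · refine ⟨i₀, Finset.mem_coe.2 hi₀C, ?_⟩
              simp only [hψ, if_pos rfl]
              omega
            · have hl' : l < m - 1 := by omega
              have : l ∈ (↑(Finset.range (m - 1)) : Set ℕ) := by
                simp only [Finset.coe_range, Set.mem_Iio]; exact hl'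
              obtain ⟨t, htM, htl⟩ := hψ₀bij.surjOn this
              have htM' : t ∈ M := Finset.mem_coe.1 htM
              refine ⟨t, Finset.mem_coe.2 (hCins ▸ Finset.mem_insert_of_mem htM'), ?_⟩
              have htne : t ≠ i₀ := fun h => hi₀M (h ▸ htM')
              simp only [hψ, if_neg htne]
              exact htl
          · -- values
            intro t htC
            by_cases h1 : t = i₀
            · subst h1
              simp only [hψ, if_pos rfl]
              exact hξi₀
            · have htM : t ∈ M := by
                rw [hCins] at htC
                rcases Finset.mem_insert.1 htC with h | h
                · exact absurd h h1
                · exact h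
              simp only [hψ, if_neg h1]
              exact hψ₀val t htM
    obtain ⟨ψ, hbij, hval⟩ :=
      hchain supp.card supp (Finset.Subset.refl _) hsupptight rfl
    refine ⟨supp, ψ, hbij, hval, ?_⟩
    intro i hi
    by_contra h
    exact hi (Finset.mem_filter.2 ⟨Finset.mem_univ i, h⟩)
  · rintro ⟨S', ψ, hbij, hval, hzero⟩
    have hS'n : S'.card ≤ n := hcardn S'
    have hψlt : ∀ i ∈ S', ψ i < S'.card := by
      intro i hi
      have := hbij.mapsTo (by exact_mod_cast hi)
      simpa using this
    have hψinj : ∀ i ∈ S', ∀ j ∈ S', ψ i = ψ j → i = j := by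
      intro i hi j hj hij
      exact hbij.injOn (by exact_mod_cast hi) (by exact_mod_cast hj) hij
    -- membership in Q
    have hnn : ∀ i, 0 ≤ ξ i := by
      intro i
      by_cases hi : i ∈ S'
      · rw [hval i hi]; exact hpos _ (lt_of_lt_of_le (hψlt i hi) hS'n)
      · rw [hzero i hi]
    have hfeas : ∀ A : Finset S, ∑ i ∈ A, ξ i ≤ ∑ l ∈ Finset.range A.card, β l := by
      intro A
      have h1 : ∑ i ∈ A, ξ i = ∑ i ∈ A ∩ S', ξ i := by
        refine (Finset.sum_subset Finset.inter_subset_left ?_).symm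
        intro i hi hni
        exact hzero i fun hiS => hni (Finset.mem_inter.2 ⟨hi, hiS⟩)
      have h2 : ∑ i ∈ A ∩ S', ξ i = ∑ l ∈ (A ∩ S').image ψ, β l := by
        rw [Finset.sum_image (fun i hi j hj => hψinj i (Finset.mem_of_mem_inter_right hi)
          j (Finset.mem_of_mem_inter_right hj))]
        exact Finset.sum_congr rfl fun i hi => hval i (Finset.mem_of_mem_inter_right hi)
      have h3 : ∑ l ∈ (A ∩ S').image ψ, β l
          ≤ ∑ l ∈ Finset.range ((A ∩ S').image ψ).card, β l := by
        refine sum_le_sum_range_card hmono ?_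
        intro l hl
        obtain ⟨i, hi, rfl⟩ := Finset.mem_image.1 hl
        exact lt_of_lt_of_le (hψlt i (Finset.mem_of_mem_inter_right hi)) hS'n
      have h4 : ((A ∩ S').image ψ).card ≤ A.card :=
        le_trans Finset.card_image_le (Finset.card_le_card Finset.inter_subset_left)
      have h5 := prefix_sum_mono hpos h4 (hcardn A)
      linarith
    refine ⟨⟨hnn, hfeas⟩, ?_⟩
    rintro y ⟨hynn, hyfeas⟩ z ⟨hznn, hzfeas⟩ hseg
    obtain ⟨a, b, ha, hb, hab, hsum⟩ := hseg
    have hcoord : ∀ i, a * y i + b * z i = ξ i := by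
      intro i
      have := congrFun hsum i
      simpa using this
    -- prefix sets are tight
    have hAcard : ∀ k, k ≤ S'.card → (S'.filter (fun i => ψ i < k)).card = k := by
      intro k hk
      have himg : (S'.filter (fun i => ψ i < k)).image ψ = Finset.range k := by
        ext l
        simp only [Finset.mem_image, Finset.mem_filter, Finset.mem_range]
        constructor
        · rintro ⟨i, ⟨_, hlt⟩, rfl⟩; exact hlt
        · intro hl
          have hl' : l ∈ (↑(Finset.range S'.card) : Set ℕ) := by
            simp only [Finset.coe_range, Set.mem_Iio]; omega
          obtain ⟨i, hi, rfl⟩ := hbij.surjOn hl'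
          exact ⟨i, ⟨by exact_mod_cast hi, hl⟩, rfl⟩
      have hcardim := Finset.card_image_of_injOn (f := ψ)
        (s := S'.filter (fun i => ψ i < k))
        (fun i hi j hj => hψinj i (Finset.mem_of_mem_filter i (Finset.mem_coe.1 hi))
          j (Finset.mem_of_mem_filter j (Finset.mem_coe.1 hj)))
      rw [himg, Finset.card_range] at hcardim
      omega
    have hAsum : ∀ k, k ≤ S'.card →
        ∑ i ∈ S'.filter (fun i => ψ i < k), ξ i = ∑ l ∈ Finset.range k, β l := by
      intro k hk
      have himg : (S'.filter (fun i => ψ i < k)).image ψ = Finset.range k := by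
        ext l
        simp only [Finset.mem_image, Finset.mem_filter, Finset.mem_range]
        constructor
        · rintro ⟨i, ⟨_, hlt⟩, rfl⟩; exact hlt
        · intro hl
          have hl' : l ∈ (↑(Finset.range S'.card) : Set ℕ) := by
            simp only [Finset.coe_range, Set.mem_Iio]; omega
          obtain ⟨i, hi, rfl⟩ := hbij.surjOn hl'
          exact ⟨i, ⟨by exact_mod_cast hi, hl⟩, rfl⟩
      rw [← himg, Finset.sum_image (fun i hi j hj => hψinj i (Finset.mem_of_mem_filter i hi)
        j (Finset.mem_of_mem_filter j hj))]
      exact Finset.sum_congr rfl fun i hi => hval i (Finset.mem_of_mem_filter i hi)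
    -- from tightness, the sums of y and z over prefix sets are forced
    have hkey : ∀ k, k ≤ S'.card →
        ∑ i ∈ S'.filter (fun i => ψ i < k), y i = ∑ l ∈ Finset.range k, β l ∧
        ∑ i ∈ S'.filter (fun i => ψ i < k), z i = ∑ l ∈ Finset.range k, β l := by
      intro k hk
      set Ak := S'.filter (fun i => ψ i < k) with hAk
      have hy2 := hyfeas Ak
      have hz2 := hzfeas Ak
      rw [hAcard k hk] at hy2 hz2
      have hmix : a * (∑ i ∈ Ak, y i) + b * (∑ i ∈ Ak, z i) = ∑ l ∈ Finset.range k, β l := by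
        rw [Finset.mul_sum, Finset.mul_sum, ← Finset.sum_add_distrib]
        rw [← hAsum k hk]
        exact Finset.sum_congr rfl fun i _ => hcoord i
      have e3 : a * (∑ l ∈ Finset.range k, β l - ∑ i ∈ Ak, y i)
          + b * (∑ l ∈ Finset.range k, β l - ∑ i ∈ Ak, z i) = 0 := by
        linear_combination (∑ l ∈ Finset.range k, β l) * hab - hmix
      have e1 : 0 ≤ a * (∑ l ∈ Finset.range k, β l - ∑ i ∈ Ak, y i) :=
        mul_nonneg ha.le (by linarith)
      have e2 : 0 ≤ b * (∑ l ∈ Finset.range k, β l - ∑ i ∈ Ak, z i) :=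
        mul_nonneg hb.le (by linarith)
      have e4 : a * (∑ l ∈ Finset.range k, β l - ∑ i ∈ Ak, y i) = 0 := by linarith
      have e5 : b * (∑ l ∈ Finset.range k, β l - ∑ i ∈ Ak, z i) = 0 := by linarith
      have e6 := (mul_eq_zero.1 e4).resolve_left ha.ne'
      have e7 := (mul_eq_zero.1 e5).resolve_left hb.ne'
      constructor <;> linarith
    -- coordinates of y and z agree with ξ
    have hyz : ∀ w : S → ℝ, (∀ i, 0 ≤ w i) →
        (∀ k, k ≤ S'.card → ∑ i ∈ S'.filter (fun i => ψ i < k), w i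
            = ∑ l ∈ Finset.range k, β l) →
        (∀ i, a * y i + b * z i = ξ i) → w = y ∨ w = z → w = ξ := by
      intro w hwnn hwsum _ _
      funext i
      by_cases hi : i ∈ S'
      · set l := ψ i with hl
        have hlS : l < S'.card := hψlt i hi
        have hstep : S'.filter (fun j => ψ j < l + 1)
            = insert i (S'.filter (fun j => ψ j < l)) := by
          ext j
          simp only [Finset.mem_filter, Finset.mem_insert]
          constructor
          · rintro ⟨hj, hjlt⟩
            rcases Nat.lt_or_ge (ψ j) l with h | h
            · exact Or.inr ⟨hj, h⟩
            · have : ψ j = l := by omega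
              exact Or.inl (hψinj j hj i hi (this.trans hl))
          · rintro (rfl | ⟨hj, hjlt⟩)
            · exact ⟨hi, by omega⟩
            · exact ⟨hj, by omega⟩
        have hnotmem : i ∉ S'.filter (fun j => ψ j < l) := by
          simp only [Finset.mem_filter]
          rintro ⟨_, h⟩; omega
        have h1 := hwsum (l + 1) hlS
        have h2 := hwsum l (Nat.le_of_lt hlS)
        rw [hstep, Finset.sum_insert hnotmem, Finset.sum_range_succ, h2] at h1
        rw [hval i hi, ← hl]
        linarith
      · have h0 := hcoord i
        rw [hzero i hi] at h0
        have hy0 : 0 ≤ a * y i := mul_nonneg ha.le (hynn i)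
        have hz0 : 0 ≤ b * z i := mul_nonneg hb.le (hznn i)
        rw [hzero i hi]
        rcases ‹w = y ∨ w = z› with rfl | rfl
        · nlinarith [hwnn i]
        · nlinarith [hwnn i]
    exact ⟨hyz y hynn (fun k hk => (hkey k hk).1) hcoord (Or.inl rfl),
      hyz z hznn (fun k hk => (hkey k hk).2) hcoord (Or.inr rfl)⟩
end
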